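/- arXiv:2009.13121 — 4 statements merged into one kernel-verified Lean document; each statement's English description precedes it below -/
import Mathlib

section
/- Let A ∈ C¹_♯(Y_d)^{d×d} be a ℤ^d-periodic C¹ matrix-valued field which is symmetric and positive semi-definite at every point, and let v ∈ C²_♯(Y_d). Set b := A∇v, a vector field in C¹_♯(Y_d)^d. Then the flow X associated with b satisfies the null asymptotics: for every x ∈ ℝ^d, X(t,x)/t → 0 as t → ∞. -/
open MeasureTheory Filter Matrix

noncomputable section

/-- A function on `ℝ^d` is `ℤ^d`-periodic. -/
def ZdPeriodic {d : ℕ} {E : Type*} (f : (Fin d → ℝ) → E) : Prop :=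
  ∀ (κ : Fin d → ℤ) (x : Fin d → ℝ), f (x + fun i => (κ i : ℝ)) = f x

/-- The unit cube `[0,1)^d`, a fundamental domain for the torus `Y_d = ℝ^d/ℤ^d`. -/
def unitCube (d : ℕ) : Set (Fin d → ℝ) := {x | ∀ i, x i ∈ Set.Ico (0 : ℝ) 1}

/-- `X` is the global flow of the vector field `b`: `∂X/∂t(t,x) = b(X(t,x))`, `X(0,x) = x`. -/
def IsFlowOf {d : ℕ} (b : (Fin d → ℝ) → (Fin d → ℝ))
    (X : ℝ → (Fin d → ℝ) → (Fin d → ℝ)) : Prop :=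
  ∀ x : Fin d → ℝ, X 0 x = x ∧ ∀ t : ℝ, HasDerivAt (fun s => X s x) (b (X t x)) t

/-- A measure `μ` on the torus `Y_d` (identified with a measure on `ℝ^d` carried by the unit
cube) is invariant for the flow `X`: `∫ ψ(X(t,y)) dμ = ∫ ψ dμ` for all `t` and all continuous
`ℤ^d`-periodic `ψ`. -/
def FlowInvariant {d : ℕ} (X : ℝ → (Fin d → ℝ) → (Fin d → ℝ))
    (μ : Measure (Fin d → ℝ)) : Prop :=
  ∀ (t : ℝ) (ψ : (Fin d → ℝ) → ℝ), Continuous ψ → ZdPeriodic ψ →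
    ∫ y, ψ (X t y) ∂μ = ∫ y, ψ y ∂μ

/-- Herman's rotation set `C_b = {∫ b dμ : μ invariant probability measure for the flow}`. -/
def rotationSet {d : ℕ} (b : (Fin d → ℝ) → (Fin d → ℝ))
    (X : ℝ → (Fin d → ℝ) → (Fin d → ℝ)) : Set (Fin d → ℝ) :=
  {ζ | ∃ μ : Measure (Fin d → ℝ), IsProbabilityMeasure μ ∧ μ (unitCube d)ᶜ = 0 ∧
        FlowInvariant X μ ∧ ζ = ∫ y, b y ∂μ}

/-- The gradient of a scalar function on `ℝ^d`. -/
def grad {d : ℕ} (ψ : (Fin d → ℝ) → ℝ) (y : Fin d → ℝ) : Fin d → ℝ :=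
  fun i => fderiv ℝ ψ y (Pi.single i 1)

lemma zd_bounded {d : ℕ} {f : (Fin d → ℝ) → ℝ} (hc : Continuous f) (hp : ZdPeriodic f) :
    ∃ C : ℝ, 0 ≤ C ∧ ∀ y, |f y| ≤ C := by
  have hK : IsCompact (Set.Icc (0 : Fin d → ℝ) 1) := isCompact_Icc
  have hne : (Set.Icc (0 : Fin d → ℝ) 1).Nonempty := ⟨0, by simp [Set.mem_Icc, Pi.le_def]⟩
  obtain ⟨z, hz, hmax⟩ := hK.exists_isMaxOn hne (hc.abs.continuousOn)
  refine ⟨|f z|, abs_nonneg _, fun y => ?_⟩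
  have hkey : f (fun i => Int.fract (y i)) = f y := by
    have := hp (fun i => -⌊y i⌋) y
    rw [← this]
    congr 1
    funext i
    show Int.fract (y i) = y i + ((-⌊y i⌋ : ℤ) : ℝ)
    rw [Int.fract]
    push_cast
    ring
  have hmem : (fun i => Int.fract (y i)) ∈ Set.Icc (0 : Fin d → ℝ) 1 := by
    constructor <;> intro i
    · exact Int.fract_nonneg _
    · exact (Int.fract_lt_one _).le
  calc |f y| = |f (fun i => Int.fract (y i))| := by rw [hkey]
    _ ≤ |f z| := hmax hmem

lemma clm_pi_apply {d : ℕ} (l : (Fin d → ℝ) →L[ℝ] ℝ) (w : Fin d → ℝ) :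
    l w = ∑ i, w i * l (Pi.single i 1) := by
  have := (l : (Fin d → ℝ) →ₗ[ℝ] ℝ).pi_apply_eq_sum_univ w
  simp only [ContinuousLinearMap.coe_coe] at this
  rw [this]
  refine Finset.sum_congr rfl fun i _ => ?_
  rw [smul_eq_mul]
  congr 1
  congr 1
  funext j
  simp [Pi.single_apply, eq_comm]

lemma psd_sq_bound {n : ℕ} (A : Matrix (Fin n) (Fin n) ℝ) (hA : A.PosSemidef)
    (hs : A.IsSymm) {C : ℝ} (hC0 : 0 ≤ C) (hC : ∀ i j, |A i j| ≤ C)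
    (w : Fin n → ℝ) (i : Fin n) :
    ((A *ᵥ w) i) ^ 2 ≤ ((n : ℝ) * C) * (w ⬝ᵥ (A *ᵥ w)) := by
  set u := A *ᵥ w with hu
  set P := w ⬝ᵥ (A *ᵥ w) with hPdef
  set Q := u ⬝ᵥ (A *ᵥ u) with hQdef
  set S := u ⬝ᵥ u with hSdef
  have hpos : ∀ z : Fin n → ℝ, 0 ≤ z ⬝ᵥ (A *ᵥ z) := by
    intro z; have := hA.dotProduct_mulVec_nonneg z; simpa using this
  have hsymm : ∀ a b : Fin n → ℝ, a ⬝ᵥ (A *ᵥ b) = b ⬝ᵥ (A *ᵥ a) := by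
    intro a b
    rw [dotProduct_mulVec, ← Matrix.mulVec_transpose, dotProduct_comm, hs.eq]
  have hP : 0 ≤ P := hpos w
  have hQ0 : 0 ≤ Q := hpos u
  have hS_eq : S = ∑ j, u j ^ 2 := by simp [hSdef, dotProduct, sq]
  have hS0 : 0 ≤ S := by rw [hS_eq]; positivity
  have hiS : u i ^ 2 ≤ S := by
    rw [hS_eq]
    exact Finset.single_le_sum (fun j _ => sq_nonneg (u j)) (Finset.mem_univ i)
  have hQle : Q ≤ (n : ℝ) * C * S := by
    have h1 : Q ≤ ∑ j, ∑ k, |u j| * (C * |u k|) := by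
      rw [hQdef, dotProduct]
      refine Finset.sum_le_sum fun j _ => ?_
      rw [mulVec, dotProduct, Finset.mul_sum]
      refine Finset.sum_le_sum fun k _ => ?_
      calc u j * (A j k * u k) ≤ |u j * (A j k * u k)| := le_abs_self _
        _ = |u j| * (|A j k| * |u k|) := by rw [abs_mul, abs_mul]
        _ ≤ |u j| * (C * |u k|) :=
          mul_le_mul_of_nonneg_left
            (mul_le_mul_of_nonneg_right (hC j k) (abs_nonneg _)) (abs_nonneg _)
    have h2 : ∑ j, ∑ k, |u j| * (C * |u k|) = C * ((∑ j, |u j|) ^ 2) := by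
      rw [sq, Finset.sum_mul_sum, Finset.mul_sum]
      exact Finset.sum_congr rfl fun j _ => by
        rw [Finset.mul_sum]
        exact Finset.sum_congr rfl fun k _ => by ring
    have h3 : (∑ j, |u j|) ^ 2 ≤ (n : ℝ) * S := by
      have := sq_sum_le_card_mul_sum_sq (s := Finset.univ) (f := fun j : Fin n => |u j|)
      simpa [sq_abs, ← hS_eq] using this
    calc Q ≤ C * ((∑ j, |u j|) ^ 2) := h1.trans h2.le
      _ ≤ C * ((n : ℝ) * S) := mul_le_mul_of_nonneg_left h3 hC0
      _ = (n : ℝ) * C * S := by ring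
  have key : ∀ t : ℝ, 0 ≤ P * (t * t) + (2 * S) * t + Q := by
    intro t
    have h0 := hpos (u + t • w)
    have hwu : w ⬝ᵥ (A *ᵥ u) = u ⬝ᵥ (A *ᵥ w) := hsymm w u
    have huw : u ⬝ᵥ (A *ᵥ w) = S := by rw [hSdef, ← hu]
    have hexp : (u + t • w) ⬝ᵥ (A *ᵥ (u + t • w)) = P * (t * t) + (2 * S) * t + Q := by
      simp only [mulVec_add, mulVec_smul, dotProduct_add, add_dotProduct,
        dotProduct_smul, smul_dotProduct, smul_eq_mul, hwu, huw, ← hPdef, ← hQdef]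
      ring
    rw [hexp] at h0
    exact h0
  have hd := discrim_le_zero key
  rw [discrim] at hd
  have hNCP : 0 ≤ (n : ℝ) * C * P :=
    mul_nonneg (mul_nonneg (Nat.cast_nonneg (α := ℝ) n) hC0) hP
  rcases eq_or_lt_of_le hS0 with h | h
  · linarith [hiS]
  · have hS2 : S * S ≤ ((n : ℝ) * C * P) * S := by
      nlinarith [mul_le_mul_of_nonneg_left hQle hP]
    have hS_le : S ≤ (n : ℝ) * C * P := le_of_mul_le_mul_right hS2 h
    linarith [hiS]

/-- If `A ∈ C¹_♯(Y_d)^{d×d}` is symmetric positive semi-definite at every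
point and `v ∈ C²_♯(Y_d)`, then the flow `X` of the current field `b := A∇v` satisfies the
null asymptotics `X(t,x)/t → 0` as `t → ∞`, for every `x ∈ ℝ^d`. -/
theorem flow_asymptotics_current_field {d : ℕ} (hd : 1 ≤ d)
    (A : (Fin d → ℝ) → Matrix (Fin d) (Fin d) ℝ)
    (hA : ∀ i j, ContDiff ℝ 1 fun y => A y i j)
    (hAper : ZdPeriodic A)
    (hAsymm : ∀ y, (A y).IsSymm)
    (hApsd : ∀ y, (A y).PosSemidef)
    (v : (Fin d → ℝ) → ℝ) (hv : ContDiff ℝ 2 v) (hvper : ZdPeriodic v)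
    (X : ℝ → (Fin d → ℝ) → (Fin d → ℝ))
    (hX : IsFlowOf (fun y => A y *ᵥ grad v y) X) :
    ∀ x : Fin d → ℝ, Tendsto (fun t : ℝ => t⁻¹ • X t x) atTop (nhds 0) := by
  intro x
  set b : (Fin d → ℝ) → (Fin d → ℝ) := fun y => A y *ᵥ grad v y with hb
  obtain ⟨hγ0, hγ'⟩ := hX x
  set γ : ℝ → (Fin d → ℝ) := fun t => X t x with hγdef
  -- basic continuity facts
  have hvd : Differentiable ℝ v := hv.differentiable two_ne_zero
  have hgradc : Continuous (grad v) :=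
    continuous_pi fun i => (hv.continuous_fderiv two_ne_zero).clm_apply continuous_const
  have hγc : Continuous γ := continuous_iff_continuousAt.mpr fun t => (hγ' t).continuousAt
  have hbc : Continuous b := by
    refine continuous_pi fun i => ?_
    have : (fun y => b y i) = fun y => ∑ j, A y i j * grad v y j := by
      funext y; simp [hb, Matrix.mulVec, dotProduct]
    rw [this]
    exact continuous_finset_sum _ fun j _ =>
      ((hA i j).continuous.mul ((continuous_apply j).comp hgradc))
  -- bounds from periodicity
  obtain ⟨Cv, hCv0, hCv⟩ := zd_bounded hv.continuous hvper
  have hFAc : Continuous fun y => ∑ i, ∑ j, |A y i j| :=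
    continuous_finset_sum _ fun i _ => continuous_finset_sum _ fun j _ => (hA i j).continuous.abs
  have hFAper : ZdPeriodic fun y => ∑ i, ∑ j, |A y i j| := by
    intro κ y
    simp only [hAper κ y]
  obtain ⟨Ca, hCa0, hCa⟩ := zd_bounded hFAc hFAper
  have hAbound : ∀ y i j, |A y i j| ≤ Ca := by
    intro y i j
    have h1 : |A y i j| ≤ ∑ j', |A y i j'| :=
      Finset.single_le_sum (f := fun j' => |A y i j'|) (fun k _ => abs_nonneg _)
        (Finset.mem_univ j)
    have h2 : ∑ j', |A y i j'| ≤ ∑ i', ∑ j', |A y i' j'| :=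
      Finset.single_le_sum (f := fun i' => ∑ j', |A y i' j'|)
        (fun k _ => Finset.sum_nonneg fun _ _ => abs_nonneg _) (Finset.mem_univ i)
    exact h1.trans (h2.trans ((le_abs_self _).trans (hCa y)))
  set M : ℝ := (d : ℝ) * Ca with hMdef
  have hM0 : 0 ≤ M := mul_nonneg (Nat.cast_nonneg _) hCa0
  -- derivative of v along the flow
  have hfd : ∀ y, fderiv ℝ v y (b y) = grad v y ⬝ᵥ b y := by
    intro y
    rw [clm_pi_apply (fderiv ℝ v y) (b y), dotProduct]
    exact Finset.sum_congr rfl fun i _ => mul_comm _ _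
  set g : ℝ → ℝ := fun s => grad v (γ s) ⬝ᵥ b (γ s) with hgdef
  have hg0 : ∀ s, 0 ≤ g s := by
    intro s
    have := (hApsd (γ s)).dotProduct_mulVec_nonneg (grad v (γ s))
    simpa [hgdef, hb] using this
  have hgc : Continuous g := by
    have : g = fun s => ∑ i, grad v (γ s) i * b (γ s) i := by
      funext s; simp [hgdef, dotProduct]
    rw [this]
    exact continuous_finset_sum _ fun i _ =>
      (((continuous_apply i).comp (hgradc.comp hγc)).mul
        ((continuous_apply i).comp (hbc.comp hγc)))
  have hvγ' : ∀ s, HasDerivAt (fun τ => v (γ τ)) (g s) s := by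
    intro s
    have h1 := (hvd (γ s)).hasFDerivAt.comp_hasDerivAt s (hγ' s)
    rwa [hfd (γ s)] at h1
  have hbγc : ∀ i, Continuous fun s => b (γ s) i := fun i =>
    (continuous_apply i).comp (hbc.comp hγc)
  have hFTC : ∀ t, ∫ s in (0:ℝ)..t, g s = v (γ t) - v x := by
    intro t
    have := intervalIntegral.integral_eq_sub_of_hasDerivAt
      (f := fun τ => v (γ τ)) (f' := g) (fun s _ => hvγ' s) (hgc.intervalIntegrable 0 t)
    rw [this]
    simp only [hγdef, hγ0]
  have hcomp : ∀ (i : Fin d) (t : ℝ), HasDerivAt (fun s => γ s i) (b (γ t) i) t := by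
    intro i t
    have := (ContinuousLinearMap.proj (R := ℝ) (φ := fun _ : Fin d => ℝ) i).hasFDerivAt.comp_hasDerivAt
      t (hγ' t)
    exact this
  have hFTCi : ∀ (i : Fin d) (t : ℝ), ∫ s in (0:ℝ)..t, b (γ s) i = γ t i - x i := by
    intro i t
    have := intervalIntegral.integral_eq_sub_of_hasDerivAt
      (f := fun s => γ s i) (f' := fun s => b (γ s) i)
      (fun s _ => hcomp i s) ((hbγc i).intervalIntegrable 0 t)
    rw [this]
    simp only [hγdef, hγ0]
  -- main estimate
  have hest : ∀ δ : ℝ, 0 < δ → ∀ t : ℝ, 0 ≤ t → ∀ i : Fin d,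
      |γ t i - x i| ≤ δ / 2 * t + M / (2 * δ) * (2 * Cv) := by
    intro δ hδ t ht i
    have hptwise : ∀ s : ℝ, |b (γ s) i| ≤ δ / 2 + M / (2 * δ) * g s := by
      intro s
      have hsq : (b (γ s) i) ^ 2 ≤ M * g s := by
        have := psd_sq_bound (A (γ s)) (hApsd (γ s)) (hAsymm (γ s)) hCa0
          (hAbound (γ s)) (grad v (γ s)) i
        simpa [hb, hgdef, hMdef] using this
      have h1 : 2 * δ * |b (γ s) i| ≤ δ * δ + M * g s := by
        nlinarith [sq_nonneg (|b (γ s) i| - δ), sq_abs (b (γ s) i)]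
      have h3 : |b (γ s) i| ≤ (δ * δ + M * g s) / (2 * δ) := by
        rw [le_div_iff₀ (by positivity)]
        nlinarith [h1]
      have h4 : (δ * δ + M * g s) / (2 * δ) = δ / 2 + M / (2 * δ) * g s := by
        field_simp
      linarith [h3, h4.le, h4.ge]
    have h1 : |γ t i - x i| ≤ ∫ s in (0:ℝ)..t, |b (γ s) i| := by
      rw [← hFTCi i t]
      exact intervalIntegral.abs_integral_le_integral_abs ht
    have h2 : ∫ s in (0:ℝ)..t, |b (γ s) i| ≤
        ∫ s in (0:ℝ)..t, (δ / 2 + M / (2 * δ) * g s) := by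
      refine intervalIntegral.integral_mono_on ht ((hbγc i).abs.intervalIntegrable 0 t)
        ((continuous_const.add (continuous_const.mul hgc)).intervalIntegrable 0 t)
        fun s _ => hptwise s
    have h3 : ∫ s in (0:ℝ)..t, (δ / 2 + M / (2 * δ) * g s)
        = δ / 2 * t + M / (2 * δ) * (v (γ t) - v x) := by
      rw [intervalIntegral.integral_add (f := fun _ => δ/2) (g := fun s => M / (2 * δ) * g s) ((continuous_const (y := δ/2)).intervalIntegrable 0 t)
        ((continuous_const.mul hgc : Continuous fun s => M / (2 * δ) * g s).intervalIntegrable 0 t),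
        intervalIntegral.integral_const, intervalIntegral.integral_const_mul, hFTC t]
      simp [smul_eq_mul]
      ring
    have h4 : M / (2 * δ) * (v (γ t) - v x) ≤ M / (2 * δ) * (2 * Cv) := by
      have hc0 : 0 ≤ M / (2 * δ) := div_nonneg hM0 (by linarith)
      have := abs_le.mp (hCv (γ t))
      have := abs_le.mp (hCv x)
      apply mul_le_mul_of_nonneg_left _ hc0
      linarith [(abs_le.mp (hCv (γ t))).2, (abs_le.mp (hCv x)).1]
    calc |γ t i - x i| ≤ ∫ s in (0:ℝ)..t, |b (γ s) i| := h1
      _ ≤ ∫ s in (0:ℝ)..t, (δ / 2 + M / (2 * δ) * g s) := h2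
      _ = δ / 2 * t + M / (2 * δ) * (v (γ t) - v x) := h3
      _ ≤ δ / 2 * t + M / (2 * δ) * (2 * Cv) := by linarith
  -- conclusion
  rw [NormedAddCommGroup.tendsto_nhds_zero]
  intro ε hε
  set δ : ℝ := ε / 2 with hδdef
  have hδ : 0 < δ := by positivity
  set K : ℝ := M / (2 * δ) * (2 * Cv) with hKdef
  have hK0 : 0 ≤ K := mul_nonneg (div_nonneg hM0 (by linarith)) (by linarith)
  filter_upwards [eventually_ge_atTop (max 1 ((‖x‖ + K + 1) * (4 / ε)))] with t ht
  have ht1 : (1 : ℝ) ≤ t := le_trans (le_max_left _ _) ht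
  have htK : (‖x‖ + K + 1) * (4 / ε) ≤ t := le_trans (le_max_right _ _) ht
  have ht0 : (0 : ℝ) < t := lt_of_lt_of_le one_pos ht1
  have hnorm : ‖γ t - x‖ ≤ δ / 2 * t + K := by
    refine (pi_norm_le_iff_of_nonneg (by positivity)).mpr fun i => ?_
    have := hest δ hδ t ht0.le i
    simpa [Real.norm_eq_abs] using this
  have hγnorm : ‖γ t‖ ≤ ‖x‖ + (δ / 2 * t + K) := by
    calc ‖γ t‖ = ‖x + (γ t - x)‖ := by ring_nf
      _ ≤ ‖x‖ + ‖γ t - x‖ := norm_add_le _ _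
      _ ≤ ‖x‖ + (δ / 2 * t + K) := by linarith
  have hsmul : ‖t⁻¹ • γ t‖ = t⁻¹ * ‖γ t‖ := by
    rw [norm_smul, Real.norm_eq_abs, abs_inv, abs_of_pos ht0]
  rw [hsmul]
  have hb1 : t⁻¹ * ‖γ t‖ ≤ t⁻¹ * (‖x‖ + K) + δ / 2 := by
    have : t⁻¹ * ‖γ t‖ ≤ t⁻¹ * (‖x‖ + (δ / 2 * t + K)) :=
      mul_le_mul_of_nonneg_left hγnorm (inv_nonneg.mpr ht0.le)
    have hh : t⁻¹ * (δ / 2 * t) = δ / 2 := by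
      field_simp
    nlinarith [this]
  have hb2 : t⁻¹ * (‖x‖ + K) ≤ ε / 4 := by
    rw [inv_mul_eq_div, div_le_iff₀ ht0]
    have h5 : (‖x‖ + K + 1) * (4 / ε) * (ε / 4) = ‖x‖ + K + 1 := by
      field_simp
    nlinarith [mul_le_mul_of_nonneg_right htK (by positivity : (0:ℝ) ≤ ε / 4)]
  linarith [hb1, hb2, hδdef]
end
end

section
/- Let b ∈ C¹_♯(Y_d)^d with flow X, and let Ψ be a C²-diffeomorphism on Y_d, i.e., Ψ : ℝ^d → ℝ^d is a C² diffeomorphism of ℝ^d with det(∇Ψ(x)) ≠ 0 for all x, and Ψ(x) = Ax + Ψ_♯(x) where A ∈ ℤ^{d×d} with |det A| = 1 and Ψ_♯ ∈ C²_♯(Y_d)^d. Define b̃(x) := ∇Ψ(Ψ⁻¹(x)) b(Ψ⁻¹(x)). Then b̃ ∈ C¹_♯(Y_d)^d, its flow is X̃(t,x) = Ψ(X(t,Ψ⁻¹(x))), the rotation set C_{b̃} is a singleton if and only if C_b is a singleton, and in that case C_b = {ζ} implies C_{b̃} = {Aζ}. -/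
open MeasureTheory Filter Matrix

noncomputable section

open Topology

section helpers

variable {d : ℕ} {E : Type*} [NormedAddCommGroup E] [NormedSpace ℝ E]

/-- Every point equals a point of the cube plus an integer vector. -/
lemma exists_cube_rep (x : Fin d → ℝ) :
    ∃ (κ : Fin d → ℤ) (y : Fin d → ℝ), (∀ i, y i ∈ Set.Ico (0:ℝ) 1) ∧
      x = y + fun i => (κ i : ℝ) := by
  refine ⟨fun i => ⌊x i⌋, fun i => Int.fract (x i), fun i => ⟨Int.fract_nonneg _, Int.fract_lt_one _⟩, ?_⟩
  funext i
  simp only [Pi.add_apply, Int.fract]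
  ring

lemma ZdPeriodic.bounded {f : (Fin d → ℝ) → E} (hper : ZdPeriodic f) (hc : Continuous f) :
    ∃ C : ℝ, 0 ≤ C ∧ ∀ x, ‖f x‖ ≤ C := by
  have hcomp : IsCompact (Set.Icc (0 : Fin d → ℝ) 1) := isCompact_Icc
  have hne : (Set.Icc (0 : Fin d → ℝ) 1).Nonempty := ⟨0, by simp⟩
  obtain ⟨z, hz, hzmax⟩ := hcomp.exists_isMaxOn hne (hc.norm.continuousOn)
  refine ⟨‖f z‖, norm_nonneg _, fun x => ?_⟩
  obtain ⟨κ, y, hy, rfl⟩ := exists_cube_rep x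
  rw [hper κ y]
  exact hzmax ⟨fun i => (hy i).1, fun i => (hy i).2.le⟩

/-- If `f (x + c) = f x + v` for all `x` then the derivative is `c`-periodic. -/
lemma fderiv_translate {f : (Fin d → ℝ) → E} (hf : Differentiable ℝ f)
    (c : Fin d → ℝ) (v : E) (h : ∀ x, f (x + c) = f x + v) (x : Fin d → ℝ) :
    fderiv ℝ f (x + c) = fderiv ℝ f x := by
  have h1 : HasFDerivAt (fun z => f (z + c)) (fderiv ℝ f (x + c)) x := by
    have := (hf (x + c)).hasFDerivAt.comp x ((hasFDerivAt_id x).add_const c)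
    exact this
  have h2 : HasFDerivAt (fun z => f (z + c)) (fderiv ℝ f x) x := by
    have : (fun z => f (z + c)) = fun z => f z + v := funext h
    rw [this]
    exact (hf x).hasFDerivAt.add_const v
  exact h1.unique h2

lemma ZdPeriodic.fderiv_per {f : (Fin d → ℝ) → E} (hper : ZdPeriodic f)
    (hf : Differentiable ℝ f) : ZdPeriodic (fderiv ℝ f) := by
  intro κ x
  exact fderiv_translate hf _ 0 (fun y => by rw [hper κ y, add_zero]) x

lemma ZdPeriodic.lipschitz {f : (Fin d → ℝ) → E} (hper : ZdPeriodic f)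
    (hf : ContDiff ℝ 1 f) : ∃ K : NNReal, LipschitzWith K f := by
  have hdiff : Differentiable ℝ f := hf.differentiable one_ne_zero
  have hcont : Continuous (fderiv ℝ f) := hf.continuous_fderiv one_ne_zero
  obtain ⟨C, hC0, hC⟩ := (hper.fderiv_per hdiff).bounded hcont
  refine ⟨C.toNNReal, lipschitzWith_of_nnnorm_fderiv_le hdiff fun x => ?_⟩
  rw [← NNReal.coe_le_coe]
  simpa [Real.coe_toNNReal _ hC0] using hC x

end helpers

section flow

variable {d : ℕ} {b : (Fin d → ℝ) → (Fin d → ℝ)} {X : ℝ → (Fin d → ℝ) → (Fin d → ℝ)}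
  {K : NNReal}

lemma flow_equivariant (hbLip : LipschitzWith K b) (hbper : ZdPeriodic b)
    (hX : IsFlowOf b X) (t : ℝ) (κ : Fin d → ℤ) (x : Fin d → ℝ) :
    X t (x + fun i => (κ i : ℝ)) = X t x + fun i => (κ i : ℝ) := by
  set c : Fin d → ℝ := fun i => (κ i : ℝ) with hc
  have h0 : (0 : ℝ) ∈ Set.Ioo (-(|t|+1)) (|t|+1) := by
    constructor <;> [nlinarith [abs_nonneg t]; nlinarith [abs_nonneg t]]
  have key : Set.EqOn (fun s => X s (x + c)) (fun s => X s x + c)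
      (Set.Ioo (-(|t|+1)) (|t|+1)) := by
    apply ODE_solution_unique_of_mem_Ioo (v := fun _ => b) (s := fun _ => Set.univ)
      (fun _ _ => hbLip.lipschitzOnWith) h0
    · exact fun s _ => ⟨(hX (x + c)).2 s, trivial⟩
    · intro s _
      refine ⟨?_, trivial⟩
      have h := ((hX x).2 s).add_const c
      have hper : b (X s x + c) = b (X s x) := hbper κ (X s x)
      simpa [hper] using h
    · simp [(hX (x + c)).1, (hX x).1]
  have ht : t ∈ Set.Ioo (-(|t|+1)) (|t|+1) := by
    constructor <;> [nlinarith [neg_abs_le t]; nlinarith [le_abs_self t]]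
  exact key ht

lemma flow_cont_time (hX : IsFlowOf b X) (x : Fin d → ℝ) : Continuous fun s => X s x := by
  rw [continuous_iff_continuousAt]
  exact fun s => ((hX x).2 s).continuousAt

lemma flow_lipschitz_nonneg (hbLip : LipschitzWith K b) (hX : IsFlowOf b X)
    {t : ℝ} (ht : 0 ≤ t) (x y : Fin d → ℝ) :
    dist (X t x) (X t y) ≤ dist x y * Real.exp (K * t) := by
  have h := dist_le_of_trajectories_ODE (v := fun _ => b) (K := K) (fun _ => hbLip)
    (f := fun s => X s x) (g := fun s => X s y) (a := 0) (b := t) (δ := dist x y)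
    (flow_cont_time hX x).continuousOn
    (fun s _ => ((hX x).2 s).hasDerivWithinAt)
    (flow_cont_time hX y).continuousOn
    (fun s _ => ((hX y).2 s).hasDerivWithinAt)
    (by simp [(hX x).1, (hX y).1]) t ⟨ht, le_rfl⟩
  simpa using h

lemma flow_continuous_nonneg (hbLip : LipschitzWith K b) (hX : IsFlowOf b X)
    {t : ℝ} (ht : 0 ≤ t) : Continuous (X t) := by
  apply (LipschitzWith.of_dist_le_mul (K := (Real.exp (K * t)).toNNReal)
    (f := X t) ?_).continuous
  intro x y
  rw [Real.coe_toNNReal _ (Real.exp_nonneg _), mul_comm]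
  exact flow_lipschitz_nonneg hbLip hX ht x y

lemma flow_continuous (hbLip : LipschitzWith K b) (hX : IsFlowOf b X) (t : ℝ) :
    Continuous (X t) := by
  rcases le_or_gt 0 t with ht | ht
  · exact flow_continuous_nonneg hbLip hX ht
  · set Y : ℝ → (Fin d → ℝ) → (Fin d → ℝ) := fun s x => X (-s) x with hY
    have hY0 : IsFlowOf (fun z => -(b z)) Y := by
      intro x
      refine ⟨by simp [hY, (hX x).1], fun s => ?_⟩
      have h := ((hX x).2 (-s)).scomp s (hasDerivAt_neg s)
      simpa [hY, neg_one_smul, Function.comp_def] using h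
    have hbLip' : LipschitzWith K (fun z => -(b z)) := fun x y => by
      simpa [edist_neg_neg] using hbLip x y
    have : Continuous (Y (-t)) :=
      flow_continuous_nonneg (K := K) hbLip' hY0 (by linarith)
    simpa [hY] using this

lemma flow_displacement (hX : IsFlowOf b X) {M : ℝ} (hM : ∀ z, ‖b z‖ ≤ M)
    {t : ℝ} (ht : 0 ≤ t) (x : Fin d → ℝ) : ‖X t x - x‖ ≤ M * t := by
  have h := norm_image_sub_le_of_norm_deriv_le_segment' (a := 0) (b := t)
    (f := fun s => X s x) (f' := fun s => b (X s x))
    (fun s _ => ((hX x).2 s).hasDerivWithinAt)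
    (fun s _ => hM _) t ⟨ht, le_rfl⟩
  simpa [(hX x).1] using h

end flow

section key

variable {d : ℕ}

/-- cast of integer matrix-vector product -/
lemma cast_mulVec (A : Matrix (Fin d) (Fin d) ℤ) (κ : Fin d → ℤ) :
    (A.map (Int.cast : ℤ → ℝ)) *ᵥ (fun i => (κ i : ℝ)) = fun i => (((A *ᵥ κ) i : ℤ) : ℝ) := by
  funext i
  simp [Matrix.mulVec, Matrix.map_apply, dotProduct]

/-- Componentwise description of a vector-valued integral. -/
lemma integral_apply' {f : (Fin d → ℝ) → (Fin d → ℝ)} {μ : Measure (Fin d → ℝ)}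
    (hf : Integrable f μ) (i : Fin d) : (∫ x, f x ∂μ) i = ∫ x, f x i ∂μ :=
  ((ContinuousLinearMap.proj i : (Fin d → ℝ) →L[ℝ] ℝ).integral_comp_comm hf).symm

lemma integrable_of_bounded_cont {f : (Fin d → ℝ) → (Fin d → ℝ)} {μ : Measure (Fin d → ℝ)}
    [IsFiniteMeasure μ] (hc : Continuous f) {C : ℝ} (hC : ∀ x, ‖f x‖ ≤ C) :
    Integrable f μ :=
  ⟨hc.aestronglyMeasurable, HasFiniteIntegral.of_bounded (ae_of_all _ hC)⟩

/-- The integral of the derivative term vanishes for invariant measures. -/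
lemma integral_fderiv_flow_zero
    {b : (Fin d → ℝ) → (Fin d → ℝ)} {X : ℝ → (Fin d → ℝ) → (Fin d → ℝ)}
    {Ψs : (Fin d → ℝ) → (Fin d → ℝ)}
    (hb : Continuous b) (hbper : ZdPeriodic b)
    (hX : IsFlowOf b X) (hXcont : ∀ t, Continuous (X t))
    (hΨs : ContDiff ℝ 1 Ψs) (hΨsper : ZdPeriodic Ψs)
    (μ : Measure (Fin d → ℝ)) [IsProbabilityMeasure μ]
    (hμinv : FlowInvariant X μ) :
    ∫ x, fderiv ℝ Ψs x (b x) ∂μ = 0 := by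
  obtain ⟨M, hM0, hM⟩ := hbper.bounded hb
  have hΨsdiff : Differentiable ℝ Ψs := hΨs.differentiable one_ne_zero
  have hfcont : Continuous (fderiv ℝ Ψs) := hΨs.continuous_fderiv one_ne_zero
  obtain ⟨L, hL0, hL⟩ := (hΨsper.fderiv_per hΨsdiff).bounded hfcont
  obtain ⟨C, hC0, hC⟩ := hΨsper.bounded hΨs.continuous
  have hΨsLip : LipschitzWith L.toNNReal Ψs := by
    apply lipschitzWith_of_nnnorm_fderiv_le hΨsdiff
    intro x
    rw [← NNReal.coe_le_coe]
    simpa [Real.coe_toNNReal _ hL0] using hL x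
  set ts : ℕ → ℝ := fun n => 1 / ((n : ℝ) + 1) with hts
  have hts_pos : ∀ n, 0 < ts n := fun n => by positivity
  set F : ℕ → (Fin d → ℝ) → (Fin d → ℝ) :=
    fun n x => (ts n)⁻¹ • (Ψs (X (ts n) x) - Ψs x) with hF
  have hint : ∀ t : ℝ, Integrable (fun x => Ψs (X t x)) μ :=
    fun t => integrable_of_bounded_cont (hΨs.continuous.comp (hXcont t)) (fun x => hC _)
  have hintΨs : Integrable Ψs μ := integrable_of_bounded_cont hΨs.continuous hC
  -- invariance of the vector integral
  have hinv : ∀ t : ℝ, ∫ x, Ψs (X t x) ∂μ = ∫ x, Ψs x ∂μ := by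
    intro t
    funext i
    rw [integral_apply' (hint t) i, integral_apply' hintΨs i]
    exact hμinv t (fun y => Ψs y i)
      ((continuous_apply i).comp hΨs.continuous)
      (fun κ x => by show Ψs _ i = Ψs x i; rw [hΨsper κ x])
  have hFzero : ∀ n, ∫ x, F n x ∂μ = 0 := by
    intro n
    rw [hF]
    simp only [integral_smul]
    rw [integral_sub (hint (ts n)) hintΨs, hinv (ts n), sub_self, smul_zero]
  -- pointwise convergence
  have hptwise : ∀ x, Filter.Tendsto (fun n => F n x) atTop (𝓝 (fderiv ℝ Ψs x (b x))) := by
    intro x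
    have hD : HasDerivAt (fun t => Ψs (X t x)) (fderiv ℝ Ψs x (b x)) 0 := by
      have h0 := (hX x).1
      have := (hΨsdiff (X 0 x)).hasFDerivAt.comp_hasDerivAt 0 ((hX x).2 0)
      rwa [h0] at this
    have hslope := hasDerivAt_iff_tendsto_slope.mp hD
    have hseq : Filter.Tendsto ts atTop (𝓝[≠] (0 : ℝ)) := by
      apply tendsto_nhdsWithin_of_tendsto_nhds_of_eventually_within
      · exact tendsto_one_div_add_atTop_nhds_zero_nat
      · exact Filter.Eventually.of_forall fun n => (hts_pos n).ne'
    have := hslope.comp hseq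
    convert this using 2 with n
    rw [hF]
    simp only [Function.comp_apply, slope_def_module, sub_zero, (hX x).1]
  -- dominated convergence
  have hbound : ∀ n, ∀ x, ‖F n x‖ ≤ L * M := by
    intro n x
    rw [hF]
    simp only [norm_smul, norm_inv, Real.norm_eq_abs, abs_of_pos (hts_pos n)]
    have h1 : ‖Ψs (X (ts n) x) - Ψs x‖ ≤ L * (M * ts n) := by
      have h2 : ‖Ψs (X (ts n) x) - Ψs x‖ ≤ L * ‖X (ts n) x - x‖ := by
        have := hΨsLip.dist_le_mul (X (ts n) x) x
        rwa [dist_eq_norm, dist_eq_norm, Real.coe_toNNReal _ hL0] at this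
      calc ‖Ψs (X (ts n) x) - Ψs x‖ ≤ L * ‖X (ts n) x - x‖ := h2
        _ ≤ L * (M * ts n) := by
            apply mul_le_mul_of_nonneg_left _ hL0
            exact flow_displacement hX hM (hts_pos n).le x
    calc (ts n)⁻¹ * ‖Ψs (X (ts n) x) - Ψs x‖ ≤ (ts n)⁻¹ * (L * (M * ts n)) := by
          apply mul_le_mul_of_nonneg_left h1 (by positivity)
      _ = L * M := by rw [show L * (M * ts n) = ts n * (L * M) by ring, ← mul_assoc, inv_mul_cancel₀ (hts_pos n).ne', one_mul]
  have htend : Filter.Tendsto (fun n => ∫ x, F n x ∂μ) atTop (𝓝 (∫ x, fderiv ℝ Ψs x (b x) ∂μ)) := by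
    apply tendsto_integral_of_dominated_convergence (fun _ => L * M)
    · intro n
      exact (((hΨs.continuous.comp (hXcont (ts n))).sub hΨs.continuous).const_smul
        (ts n)⁻¹).aestronglyMeasurable
    · exact integrable_const _
    · exact fun n => ae_of_all _ (hbound n)
    · exact ae_of_all _ hptwise
  have : Filter.Tendsto (fun _ : ℕ => (0 : Fin d → ℝ)) atTop (𝓝 (∫ x, fderiv ℝ Ψs x (b x) ∂μ)) := by
    simpa [hFzero] using htend
  exact (tendsto_nhds_unique tendsto_const_nhds this).symm

end key

section transfer

variable {d : ℕ}

lemma mem_rotationSet_map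
    {b bt : (Fin d → ℝ) → (Fin d → ℝ)}
    {X Xt : ℝ → (Fin d → ℝ) → (Fin d → ℝ)}
    {Ψ Ψs : (Fin d → ℝ) → (Fin d → ℝ)}
    (A : Matrix (Fin d) (Fin d) ℤ)
    (hb : Continuous b) (hbper : ZdPeriodic b)
    (hbt : Continuous bt) (hbtper : ZdPeriodic bt)
    (hX : IsFlowOf b X) (hXcont : ∀ t, Continuous (X t))
    (hXtcont : ∀ t, Continuous (Xt t))
    (hXtper : ∀ (t : ℝ) (κ : Fin d → ℤ) (x : Fin d → ℝ),
      Xt t (x + fun i => (κ i : ℝ)) = Xt t x + fun i => (κ i : ℝ))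
    (hXtΨ : ∀ t x, Xt t (Ψ x) = Ψ (X t x))
    (hΨc : Continuous Ψ)
    (hΨs : ContDiff ℝ 1 Ψs) (hΨsper : ZdPeriodic Ψs)
    (hbtΨ : ∀ x, bt (Ψ x) = (A.map (Int.cast : ℤ → ℝ)) *ᵥ (b x) + fderiv ℝ Ψs x (b x))
    (hdecomp : ∀ x, Ψ x = (A.map (Int.cast : ℤ → ℝ)) *ᵥ x + Ψs x)
    {ζ : Fin d → ℝ} (hζ : ζ ∈ rotationSet b X) :
    (A.map (Int.cast : ℤ → ℝ)) *ᵥ ζ ∈ rotationSet bt Xt := by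
  obtain ⟨μ, hμP, hμcube, hμinv, rfl⟩ := hζ
  haveI := hμP
  set A' : Matrix (Fin d) (Fin d) ℝ := A.map (Int.cast : ℤ → ℝ) with hA'
  set T : (Fin d → ℝ) → (Fin d → ℝ) := fun x i => Int.fract (Ψ x i) with hTdef
  have hTmeas : Measurable T :=
    measurable_pi_lambda _ fun i => ((continuous_apply i).comp hΨc).measurable.fract
  set κf : (Fin d → ℝ) → (Fin d → ℤ) := fun x i => ⌊Ψ x i⌋ with hκf
  have hT : ∀ x, Ψ x = T x + fun i => ((κf x i : ℤ) : ℝ) := by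
    intro x; funext i
    simp only [hTdef, hκf, Pi.add_apply, Int.fract]
    ring
  have hΨeq : ∀ (κ : Fin d → ℤ) (x : Fin d → ℝ),
      Ψ (x + fun i => (κ i : ℝ)) = Ψ x + fun i => (((A *ᵥ κ) i : ℤ) : ℝ) := by
    intro κ x
    rw [hdecomp, hdecomp x, Matrix.mulVec_add, hΨsper κ x, ← cast_mulVec]
    module
  have hψT : ∀ (ψ : (Fin d → ℝ) → ℝ), ZdPeriodic ψ → ∀ x, ψ (Ψ x) = ψ (T x) := by
    intro ψ hper x
    conv_lhs => rw [hT x]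
    exact hper (κf x) (T x)
  refine ⟨μ.map T, Measure.isProbabilityMeasure_map hTmeas.aemeasurable, ?_, ?_, ?_⟩
  · have hmeas : MeasurableSet (unitCube d) := by
      have : unitCube d = ⋂ i, (fun x : Fin d → ℝ => x i) ⁻¹' (Set.Ico 0 1) := by
        ext x; simp [unitCube]
      rw [this]
      exact MeasurableSet.iInter fun i => (measurable_pi_apply i) measurableSet_Ico
    rw [Measure.map_apply hTmeas hmeas.compl]
    have hempty : T ⁻¹' (unitCube d)ᶜ = ∅ := by
      ext x
      simp only [Set.mem_preimage, Set.mem_compl_iff, Set.mem_empty_iff_false, iff_false,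
        not_not, unitCube, Set.mem_setOf_eq]
      intro i
      exact ⟨Int.fract_nonneg _, Int.fract_lt_one _⟩
    rw [hempty]; exact measure_empty
  · intro t ψ hψc hψper
    rw [integral_map (f := fun y => ψ (Xt t y)) hTmeas.aemeasurable
          (hψc.comp (hXtcont t)).aestronglyMeasurable,
        integral_map hTmeas.aemeasurable hψc.aestronglyMeasurable]
    have hpt : ∀ x, ψ (Xt t (T x)) = ψ (Ψ (X t x)) := by
      intro x
      have h1 : Xt t (Ψ x) = Xt t (T x) + fun i => ((κf x i : ℤ) : ℝ) := by
        conv_lhs => rw [hT x]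
        exact hXtper t (κf x) (T x)
      have h2 : ψ (Xt t (T x)) = ψ (Xt t (Ψ x)) := by
        rw [h1]; exact (hψper (κf x) (Xt t (T x))).symm
      rw [h2, hXtΨ]
    have step1 : ∫ x, ψ (Xt t (T x)) ∂μ = ∫ x, ψ (Ψ (X t x)) ∂μ :=
      integral_congr_ae (Filter.Eventually.of_forall hpt)
    have step2 : ∫ x, ψ (Ψ (X t x)) ∂μ = ∫ x, ψ (Ψ x) ∂μ := by
      apply hμinv t (fun y => ψ (Ψ y)) (hψc.comp hΨc)
      intro κ x
      show ψ (Ψ (x + fun i => (κ i : ℝ))) = ψ (Ψ x)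
      rw [hΨeq κ x]
      exact hψper (A *ᵥ κ) (Ψ x)
    have step3 : ∫ x, ψ (Ψ x) ∂μ = ∫ x, ψ (T x) ∂μ :=
      integral_congr_ae (Filter.Eventually.of_forall fun x => hψT ψ hψper x)
    rw [step1, step2, step3]
  · obtain ⟨M, hM0, hM⟩ := hbper.bounded hb
    have hbint : Integrable b μ := integrable_of_bounded_cont hb hM
    set Lc : (Fin d → ℝ) →L[ℝ] (Fin d → ℝ) :=
      LinearMap.toContinuousLinearMap (Matrix.mulVecLin A') with hLc
    have hLcapp : ∀ v, Lc v = A' *ᵥ v := fun v => by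
      simp [hLc, Matrix.mulVecLin_apply]
    have hgcont : Continuous fun x => fderiv ℝ Ψs x (b x) :=
      (hΨs.continuous_fderiv one_ne_zero).clm_apply hb
    obtain ⟨L, hL0, hL⟩ :=
      (hΨsper.fderiv_per (hΨs.differentiable one_ne_zero)).bounded (hΨs.continuous_fderiv one_ne_zero)
    have hgint : Integrable (fun x => fderiv ℝ Ψs x (b x)) μ := by
      apply integrable_of_bounded_cont hgcont (C := L * M)
      intro x
      calc ‖fderiv ℝ Ψs x (b x)‖ ≤ ‖fderiv ℝ Ψs x‖ * ‖b x‖ :=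
            (fderiv ℝ Ψs x).le_opNorm (b x)
        _ ≤ L * M := mul_le_mul (hL x) (hM x) (norm_nonneg _) hL0
    rw [integral_map hTmeas.aemeasurable hbt.aestronglyMeasurable]
    have h1 : ∀ x, bt (T x) = A' *ᵥ b x + fderiv ℝ Ψs x (b x) := by
      intro x
      rw [← hbtΨ x]
      conv_lhs => rw [show bt (T x) = bt (Ψ x) by rw [hT x]; exact (hbtper (κf x) (T x)).symm]
    calc (A' *ᵥ ∫ y, b y ∂μ)
        = Lc (∫ y, b y ∂μ) + 0 := by rw [hLcapp, add_zero]
      _ = (∫ y, Lc (b y) ∂μ) + ∫ x, fderiv ℝ Ψs x (b x) ∂μ := by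
          rw [Lc.integral_comp_comm hbint,
            integral_fderiv_flow_zero hb hbper hX hXcont hΨs hΨsper μ hμinv]
      _ = ∫ x, (A' *ᵥ b x + fderiv ℝ Ψs x (b x)) ∂μ := by
          rw [← integral_add (Lc.integrable_comp hbint) hgint]
          simp_rw [hLcapp]
      _ = ∫ x, bt (T x) ∂μ := by
          exact integral_congr_ae (Filter.Eventually.of_forall fun x => (h1 x).symm)

end transfer

/-- Stability of the singleton condition under a `C²`-diffeomorphism `Ψ` of
the torus: with `b̃(x) := ∇Ψ(Ψ⁻¹(x)) b(Ψ⁻¹(x))`, one has `b̃ ∈ C¹_♯(Y_d)^d`, the flow of `b̃`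
is `X̃(t,x) = Ψ(X(t,Ψ⁻¹(x)))`, the rotation set `C_b̃` is a singleton iff `C_b` is, and
`C_b = {ζ}` implies `C_b̃ = {Aζ}`. -/
theorem rotationSet_singleton_diffeomorphism_stability {d : ℕ} (hd : 1 ≤ d)
    (b : (Fin d → ℝ) → (Fin d → ℝ)) (hb : ContDiff ℝ 1 b) (hbper : ZdPeriodic b)
    (X : ℝ → (Fin d → ℝ) → (Fin d → ℝ)) (hX : IsFlowOf b X)
    (Ψ Ψinv : (Fin d → ℝ) → (Fin d → ℝ))
    (hΨ : ContDiff ℝ 2 Ψ) (hΨinv : ContDiff ℝ 2 Ψinv)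
    (hli : Function.LeftInverse Ψinv Ψ) (hri : Function.RightInverse Ψinv Ψ)
    (hdet : ∀ x : Fin d → ℝ, (fderiv ℝ Ψ x).det ≠ 0)
    (A : Matrix (Fin d) (Fin d) ℤ) (hA : |A.det| = 1)
    (Ψs : (Fin d → ℝ) → (Fin d → ℝ)) (hΨs : ContDiff ℝ 2 Ψs) (hΨsper : ZdPeriodic Ψs)
    (hdecomp : ∀ x : Fin d → ℝ, Ψ x = (A.map (Int.cast : ℤ → ℝ)) *ᵥ x + Ψs x)
    (bt : (Fin d → ℝ) → (Fin d → ℝ))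
    (hbt : bt = fun x => fderiv ℝ Ψ (Ψinv x) (b (Ψinv x)))
    (Xt : ℝ → (Fin d → ℝ) → (Fin d → ℝ))
    (hXt : Xt = fun t x => Ψ (X t (Ψinv x))) :
    (ContDiff ℝ 1 bt ∧ ZdPeriodic bt) ∧
    IsFlowOf bt Xt ∧
    ((∃ ζ, rotationSet bt Xt = {ζ}) ↔ (∃ ζ, rotationSet b X = {ζ})) ∧
    (∀ ζ : Fin d → ℝ, rotationSet b X = {ζ} →
      rotationSet bt Xt = {(A.map (Int.cast : ℤ → ℝ)) *ᵥ ζ}) := by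
  subst hbt hXt
  set A' : Matrix (Fin d) (Fin d) ℝ := A.map (Int.cast : ℤ → ℝ) with hA'def
  have hΨdiff : Differentiable ℝ Ψ := hΨ.differentiable two_ne_zero
  have hΨinvdiff : Differentiable ℝ Ψinv := hΨinv.differentiable two_ne_zero
  have hΨsdiff : Differentiable ℝ Ψs := hΨs.differentiable two_ne_zero
  have hbc : Continuous b := hb.continuous
  -- equivariance of Ψ
  have hΨeq : ∀ (κ : Fin d → ℤ) (x : Fin d → ℝ),
      Ψ (x + fun i => (κ i : ℝ)) = Ψ x + fun i => (((A *ᵥ κ) i : ℤ) : ℝ) := by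
    intro κ x
    rw [hdecomp, hdecomp x, Matrix.mulVec_add, hΨsper κ x, ← cast_mulVec]
    module
  -- the inverse integer matrix
  have hdetunit : IsUnit A.det := by
    rcases (abs_eq (by norm_num : (0:ℤ) ≤ 1)).mp hA with h | h
    · rw [h]; exact isUnit_one
    · rw [h]; exact IsUnit.neg isUnit_one
  haveI := A.invertibleOfIsUnitDet hdetunit
  set B : Matrix (Fin d) (Fin d) ℤ := ⅟A with hBdef
  have hAB : A * B = 1 := mul_invOf_self A
  have hBA : B * A = 1 := invOf_mul_self A
  set B' : Matrix (Fin d) (Fin d) ℝ := B.map (Int.cast : ℤ → ℝ) with hB'def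
  have hmapmul : ∀ (M N : Matrix (Fin d) (Fin d) ℤ), (M * N).map (Int.cast : ℤ → ℝ)
      = M.map (Int.cast : ℤ → ℝ) * N.map (Int.cast : ℤ → ℝ) := by
    intro M N
    exact Matrix.map_mul (f := Int.castRingHom ℝ)
  have hA'B' : A' * B' = 1 := by
    rw [hA'def, hB'def, ← hmapmul, hAB]
    ext i j
    simp [Matrix.map_apply, Matrix.one_apply]
  have hB'A' : B' * A' = 1 := by
    rw [hA'def, hB'def, ← hmapmul, hBA]
    ext i j
    simp [Matrix.map_apply, Matrix.one_apply]
  have hABκ : ∀ κ : Fin d → ℤ, A *ᵥ (B *ᵥ κ) = κ := fun κ => by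
    rw [Matrix.mulVec_mulVec, hAB, Matrix.one_mulVec]
  have hABv : ∀ v : Fin d → ℝ, A' *ᵥ (B' *ᵥ v) = v := fun v => by
    rw [Matrix.mulVec_mulVec, hA'B', Matrix.one_mulVec]
  have hBAv : ∀ v : Fin d → ℝ, B' *ᵥ (A' *ᵥ v) = v := fun v => by
    rw [Matrix.mulVec_mulVec, hB'A', Matrix.one_mulVec]
  -- equivariance of Ψinv
  have hΨinveq : ∀ (κ : Fin d → ℤ) (x : Fin d → ℝ),
      Ψinv (x + fun i => (κ i : ℝ)) = Ψinv x + fun i => (((B *ᵥ κ) i : ℤ) : ℝ) := by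
    intro κ x
    have h1 : Ψ (Ψinv x + fun i => (((B *ᵥ κ) i : ℤ) : ℝ)) = x + fun i => (κ i : ℝ) := by
      rw [hΨeq (B *ᵥ κ) (Ψinv x), hri x, hABκ κ]
    calc Ψinv (x + fun i => (κ i : ℝ))
        = Ψinv (Ψ (Ψinv x + fun i => (((B *ᵥ κ) i : ℤ) : ℝ))) := by rw [h1]
      _ = Ψinv x + fun i => (((B *ᵥ κ) i : ℤ) : ℝ) := hli _
  -- translation invariance of fderiv Ψ
  have hfΨper : ∀ (κ : Fin d → ℤ) (y : Fin d → ℝ),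
      fderiv ℝ Ψ (y + fun i => (κ i : ℝ)) = fderiv ℝ Ψ y :=
    fun κ y => fderiv_translate hΨdiff _ _ (fun z => hΨeq κ z) y
  -- Part 1
  have hbtC1 : ContDiff ℝ 1 (fun x => fderiv ℝ Ψ (Ψinv x) (b (Ψinv x))) := by
    have h1 : ContDiff ℝ 1 (fun x => fderiv ℝ Ψ (Ψinv x)) :=
      (hΨ.fderiv_right (by norm_num)).comp (hΨinv.of_le one_le_two)
    have h2 : ContDiff ℝ 1 (fun x => b (Ψinv x)) := hb.comp (hΨinv.of_le one_le_two)
    exact h1.clm_apply h2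
  have hbtper : ZdPeriodic (fun x => fderiv ℝ Ψ (Ψinv x) (b (Ψinv x))) := by
    intro κ x
    show fderiv ℝ Ψ (Ψinv (x + fun i => (κ i : ℝ))) (b (Ψinv (x + fun i => (κ i : ℝ))))
      = fderiv ℝ Ψ (Ψinv x) (b (Ψinv x))
    rw [hΨinveq κ x, hfΨper (B *ᵥ κ) (Ψinv x), hbper (B *ᵥ κ) (Ψinv x)]
  -- Part 2 : the flow
  have hXtflow : IsFlowOf (fun x => fderiv ℝ Ψ (Ψinv x) (b (Ψinv x)))
      (fun t x => Ψ (X t (Ψinv x))) := by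
    intro x
    constructor
    · show Ψ (X 0 (Ψinv x)) = x
      rw [(hX (Ψinv x)).1, hri x]
    · intro t
      have h := (hΨdiff (X t (Ψinv x))).hasFDerivAt.comp_hasDerivAt t ((hX (Ψinv x)).2 t)
      simpa [Function.comp_def, hli (X t (Ψinv x))] using h
  -- continuity and equivariance of the flows
  obtain ⟨Kb, hbLip⟩ := hbper.lipschitz hb
  have hXcont : ∀ t, Continuous (X t) := flow_continuous hbLip hX
  have hXper := flow_equivariant hbLip hbper hX
  have hXtcont : ∀ t, Continuous (fun x => Ψ (X t (Ψinv x))) :=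
    fun t => hΨ.continuous.comp ((hXcont t).comp hΨinv.continuous)
  have hXtper : ∀ (t : ℝ) (κ : Fin d → ℤ) (x : Fin d → ℝ),
      Ψ (X t (Ψinv (x + fun i => (κ i : ℝ)))) = Ψ (X t (Ψinv x)) + fun i => (κ i : ℝ) := by
    intro t κ x
    rw [hΨinveq κ x, hXper t (B *ᵥ κ) (Ψinv x), hΨeq (B *ᵥ κ) (X t (Ψinv x)), hABκ κ]
  have hXtΨ : ∀ t x, Ψ (X t (Ψinv (Ψ x))) = Ψ (X t x) := fun t x => by rw [hli x]
  -- fderiv decomposition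
  set Lc : (Fin d → ℝ) →L[ℝ] (Fin d → ℝ) :=
    LinearMap.toContinuousLinearMap (Matrix.mulVecLin A') with hLcdef
  have hLcapp : ∀ v, Lc v = A' *ᵥ v := fun v => rfl
  have hfderivΨ : ∀ x v, fderiv ℝ Ψ x v = A' *ᵥ v + fderiv ℝ Ψs x v := by
    intro x v
    have h1 : HasFDerivAt (fun y => Lc y + Ψs y) (Lc + fderiv ℝ Ψs x) x :=
      (Lc.hasFDerivAt).add (hΨsdiff x).hasFDerivAt
    have h2 : Ψ = fun y => Lc y + Ψs y := funext fun y => by rw [hdecomp y, hLcapp]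
    have h3 : HasFDerivAt Ψ (Lc + fderiv ℝ Ψs x) x := by rw [h2]; exact h1
    rw [h3.fderiv, ContinuousLinearMap.add_apply, hLcapp]
  have hbtΨ : ∀ x, (fun x => fderiv ℝ Ψ (Ψinv x) (b (Ψinv x))) (Ψ x)
      = A' *ᵥ b x + fderiv ℝ Ψs x (b x) := by
    intro x
    show fderiv ℝ Ψ (Ψinv (Ψ x)) (b (Ψinv (Ψ x))) = _
    rw [hli x, hfderivΨ]
  -- forward transfer
  have hforward : ∀ ζ ∈ rotationSet b X,
      A' *ᵥ ζ ∈ rotationSet (fun x => fderiv ℝ Ψ (Ψinv x) (b (Ψinv x)))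
        (fun t x => Ψ (X t (Ψinv x))) := by
    intro ζ hζ
    exact mem_rotationSet_map A hbc hbper hbtC1.continuous hbtper hX hXcont hXtcont hXtper
      hXtΨ hΨ.continuous (hΨs.of_le one_le_two) hΨsper hbtΨ hdecomp hζ
  -- symmetric data
  set Lc' : (Fin d → ℝ) →L[ℝ] (Fin d → ℝ) :=
    LinearMap.toContinuousLinearMap (Matrix.mulVecLin B') with hLc'def
  have hLc'app : ∀ v, Lc' v = B' *ᵥ v := fun v => rfl
  set Ψinvs : (Fin d → ℝ) → (Fin d → ℝ) := fun x => Ψinv x - Lc' x with hΨinvsdef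
  have hΨinvsC1 : ContDiff ℝ 1 Ψinvs := (hΨinv.of_le one_le_two).sub Lc'.contDiff
  have hΨinvsper : ZdPeriodic Ψinvs := by
    intro κ x
    show Ψinv (x + fun i => (κ i : ℝ)) - Lc' (x + fun i => (κ i : ℝ)) = Ψinv x - Lc' x
    rw [hΨinveq κ x, map_add, hLc'app (fun i => (κ i : ℝ)), cast_mulVec B κ]
    abel
  have hdecompinv : ∀ x, Ψinv x = B' *ᵥ x + Ψinvs x := by
    intro x
    show Ψinv x = B' *ᵥ x + (Ψinv x - Lc' x)
    rw [hLc'app]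
    abel
  have hfderivΨinv : ∀ x v, fderiv ℝ Ψinv x v = B' *ᵥ v + fderiv ℝ Ψinvs x v := by
    intro x v
    have h1 : HasFDerivAt (fun y => Lc' y + Ψinvs y) (Lc' + fderiv ℝ Ψinvs x) x :=
      (Lc'.hasFDerivAt).add ((hΨinvsC1.differentiable one_ne_zero) x).hasFDerivAt
    have h2 : Ψinv = fun y => Lc' y + Ψinvs y := funext fun y => by rw [hdecompinv y, hLc'app]
    have h3 : HasFDerivAt Ψinv (Lc' + fderiv ℝ Ψinvs x) x := by rw [h2]; exact h1
    rw [h3.fderiv, ContinuousLinearMap.add_apply, hLc'app]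
  have hchain : ∀ y, (fderiv ℝ Ψinv (Ψ y)).comp (fderiv ℝ Ψ y)
      = ContinuousLinearMap.id ℝ (Fin d → ℝ) := by
    intro y
    have h1 : HasFDerivAt (Ψinv ∘ Ψ) ((fderiv ℝ Ψinv (Ψ y)).comp (fderiv ℝ Ψ y)) y :=
      (hΨinvdiff (Ψ y)).hasFDerivAt.comp y (hΨdiff y).hasFDerivAt
    have h2 : Ψinv ∘ Ψ = id := funext hli
    rw [h2] at h1
    exact h1.unique (hasFDerivAt_id y)
  have hbtΨsym : ∀ x, b (Ψinv x)
      = B' *ᵥ ((fun x => fderiv ℝ Ψ (Ψinv x) (b (Ψinv x))) x)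
        + fderiv ℝ Ψinvs x ((fun x => fderiv ℝ Ψ (Ψinv x) (b (Ψinv x))) x) := by
    intro x
    rw [← hfderivΨinv x]
    have hc := hchain (Ψinv x)
    rw [hri x] at hc
    calc b (Ψinv x)
        = (ContinuousLinearMap.id ℝ (Fin d → ℝ)) (b (Ψinv x)) := rfl
      _ = ((fderiv ℝ Ψinv x).comp (fderiv ℝ Ψ (Ψinv x))) (b (Ψinv x)) := by rw [hc]
      _ = fderiv ℝ Ψinv x (fderiv ℝ Ψ (Ψinv x) (b (Ψinv x))) := rfl
  have hXtΨsym : ∀ t x, X t (Ψinv x) = Ψinv (Ψ (X t (Ψinv x))) := fun t x => (hli _).symm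
  have hbackward : ∀ ξ ∈ rotationSet (fun x => fderiv ℝ Ψ (Ψinv x) (b (Ψinv x)))
      (fun t x => Ψ (X t (Ψinv x))), B' *ᵥ ξ ∈ rotationSet b X := by
    intro ξ hξ
    exact mem_rotationSet_map B hbtC1.continuous hbtper hbc hbper hXtflow hXtcont hXcont
      hXper hXtΨsym hΨinv.continuous hΨinvsC1 hΨinvsper hbtΨsym hdecompinv hξ
  -- Part 4
  have hpart4 : ∀ ζ : Fin d → ℝ, rotationSet b X = {ζ} →
      rotationSet (fun x => fderiv ℝ Ψ (Ψinv x) (b (Ψinv x)))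
        (fun t x => Ψ (X t (Ψinv x))) = {A' *ᵥ ζ} := by
    intro ζ hζ
    ext ξ
    simp only [Set.mem_singleton_iff]
    constructor
    · intro hξ
      have h1 := hbackward ξ hξ
      rw [hζ, Set.mem_singleton_iff] at h1
      rw [← hABv ξ, h1]
    · intro h
      subst h
      exact hforward ζ (by rw [hζ]; exact rfl)
  refine ⟨⟨hbtC1, hbtper⟩, hXtflow, ⟨?_, ?_⟩, hpart4⟩
  · rintro ⟨ξ, hξ⟩
    refine ⟨B' *ᵥ ξ, ?_⟩
    ext v
    simp only [Set.mem_singleton_iff]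
    constructor
    · intro hv
      have h1 := hforward v hv
      rw [hξ, Set.mem_singleton_iff] at h1
      rw [← hBAv v, h1]
    · intro h
      subst h
      exact hbackward ξ (by rw [hξ]; exact rfl)
  · rintro ⟨ζ, hζ⟩
    exact ⟨A' *ᵥ ζ, hpart4 ζ hζ⟩
end
end

section
/- Let Φ ∈ C¹_♯(Y_d)^d vanish nowhere, let ρ ∈ C¹_♯(Y_d) be nonnegative, let r ∈ C¹_♯(Y_d) be positive everywhere, and let μ be an invariant probability measure for the flow of b := ρΦ such that c := ∫_{Y_d} (ρ(y)/r(y)) dμ(y) > 0. Then the probability measure μ' on Y_d defined by dμ'(y) := c⁻¹ (ρ(y)/r(y)) dμ(y) is invariant for the flow associated with the vector field rΦ. -/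
open MeasureTheory Filter Matrix
open scoped NNReal ENNReal Topology Convolution

noncomputable section

section Aux

variable {d : ℕ}

theorem per_bound {F : Type*} [NormedAddCommGroup F] {f : (Fin d → ℝ) → F}
    (hf : Continuous f) (hp : ZdPeriodic f) : ∃ C : ℝ, 0 ≤ C ∧ ∀ x, ‖f x‖ ≤ C := by
  obtain ⟨C, hC⟩ := (isCompact_Icc (a := (0 : Fin d → ℝ)) (b := 1)).exists_bound_of_continuousOn
    hf.continuousOn
  refine ⟨max C 0, le_max_right _ _, fun x => ?_⟩
  have hper := hp (fun i => -⌊x i⌋) x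
  have hmem : (x + fun i => ((-⌊x i⌋ : ℤ) : ℝ)) ∈ Set.Icc (0 : Fin d → ℝ) 1 := by
    constructor <;> rw [Pi.le_def] <;> intro i
    · have := Int.fract_nonneg (x i)
      simp only [Pi.add_apply, Pi.zero_apply]
      push_cast
      rw [← Int.self_sub_floor] at this
      linarith
    · have := (Int.fract_lt_one (x i)).le
      simp only [Pi.add_apply, Pi.one_apply]
      push_cast
      rw [← Int.self_sub_floor] at this
      linarith
  calc ‖f x‖ = ‖f (x + fun i => ((-⌊x i⌋ : ℤ) : ℝ))‖ := by rw [hper]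
  _ ≤ C := hC _ hmem
  _ ≤ max C 0 := le_max_left _ _

theorem per_fderiv {F : Type*} [NormedAddCommGroup F] [NormedSpace ℝ F]
    {f : (Fin d → ℝ) → F} (hf : Differentiable ℝ f) (hp : ZdPeriodic f) :
    ZdPeriodic (fun x => fderiv ℝ f x) := by
  intro κ x
  have hgf : (fun y => f (y + fun i => ((κ i : ℤ) : ℝ))) = f := funext fun y => hp κ y
  have h1 : HasFDerivAt (fun y => f (y + fun i => ((κ i : ℤ) : ℝ)))
      (fderiv ℝ f (x + fun i => ((κ i : ℤ) : ℝ))) x := by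
    have := ((hf _).hasFDerivAt.comp x ((hasFDerivAt_id x).add_const
      (fun i => ((κ i : ℤ) : ℝ))))
    simpa [Function.comp_def] using this
  rw [hgf] at h1
  simpa using h1.fderiv.symm

theorem per_lipschitz {F : Type*} [NormedAddCommGroup F] [NormedSpace ℝ F]
    {f : (Fin d → ℝ) → F} (hf : ContDiff ℝ 1 f) (hp : ZdPeriodic f) :
    ∃ K : ℝ≥0, LipschitzWith K f := by
  obtain ⟨C, hC0, hC⟩ := per_bound (hf.continuous_fderiv one_ne_zero)
    (per_fderiv (hf.differentiable one_ne_zero) hp)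
  refine ⟨C.toNNReal, lipschitzWith_of_nnnorm_fderiv_le (hf.differentiable one_ne_zero) fun x => ?_⟩
  rw [← norm_toNNReal]
  exact Real.toNNReal_mono (hC x)


theorem flow_unique {b : (Fin d → ℝ) → (Fin d → ℝ)} {K : ℝ≥0} (hb : LipschitzWith K b)
    {X : ℝ → (Fin d → ℝ) → (Fin d → ℝ)} (hX : IsFlowOf b X) {f : ℝ → Fin d → ℝ}
    {x : Fin d → ℝ} (hf0 : f 0 = x) (hf : ∀ t, HasDerivAt f (b (f t)) t) (t : ℝ) :
    f t = X t x := by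
  have hXc : Continuous fun s => X s x :=
    continuous_iff_continuousAt.mpr fun s => ((hX x).2 s).continuousAt
  have hfc : Continuous f := continuous_iff_continuousAt.mpr fun s => (hf s).continuousAt
  have h0 : (0 : ℝ) ∈ Set.Ioo (-(|t| + 1)) (|t| + 1) := by
    constructor <;> [nlinarith [abs_nonneg t]; nlinarith [abs_nonneg t]]
  have := ODE_solution_unique_of_mem_Icc (v := fun _ y => b y) (s := fun _ => Set.univ)
    (fun _ _ => hb.lipschitzOnWith) h0 hfc.continuousOn (fun s _ => hf s)
    (fun _ _ => trivial) hXc.continuousOn (fun s _ => (hX x).2 s) (fun _ _ => trivial)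
    (by rw [hf0, (hX x).1])
  exact this ⟨by nlinarith [neg_abs_le t], by nlinarith [le_abs_self t]⟩

theorem flow_add {b : (Fin d → ℝ) → (Fin d → ℝ)} {K : ℝ≥0} (hb : LipschitzWith K b)
    {X : ℝ → (Fin d → ℝ) → (Fin d → ℝ)} (hX : IsFlowOf b X) (s : ℝ) (x : Fin d → ℝ)
    (t : ℝ) : X (t + s) x = X t (X s x) := by
  refine flow_unique hb hX (f := fun u => X (u + s) x) (by simp) (fun u => ?_) t
  have h1 : HasDerivAt (fun v : ℝ => v + s) 1 u := (hasDerivAt_id u).add_const s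
  have h2 : HasDerivAt (fun v => X v x) (b (X (u + s) x)) (u + s) := (hX x).2 (u + s)
  have := h2.scomp u h1
  simpa [Function.comp_def] using this

theorem flow_periodic {b : (Fin d → ℝ) → (Fin d → ℝ)} {K : ℝ≥0} (hb : LipschitzWith K b)
    (hbp : ZdPeriodic b) {X : ℝ → (Fin d → ℝ) → (Fin d → ℝ)} (hX : IsFlowOf b X)
    (t : ℝ) (x : Fin d → ℝ) (κ : Fin d → ℤ) :
    X t (x + fun i => (κ i : ℝ)) = X t x + fun i => (κ i : ℝ) := by
  refine (flow_unique hb hX (f := fun u => X u x + fun i => (κ i : ℝ))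
    (by simp [(hX x).1]) (fun u => ?_) t).symm
  have := ((hX x).2 u).add_const (fun i => (κ i : ℝ))
  simpa [hbp κ (X u x)] using this

theorem flow_dist {b : (Fin d → ℝ) → (Fin d → ℝ)} {K : ℝ≥0} (hb : LipschitzWith K b)
    {X : ℝ → (Fin d → ℝ) → (Fin d → ℝ)} (hX : IsFlowOf b X) (t : ℝ) (x y : Fin d → ℝ) :
    dist (X t x) (X t y) ≤ dist x y * Real.exp (K * |t|) := by
  rcases le_or_gt 0 t with ht | ht
  · have := dist_le_of_trajectories_ODE (v := fun _ => b) (fun _ => hb)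
      (f := fun s => X s x) (g := fun s => X s y) (a := 0) (b := t) (δ := dist x y)
      (continuous_iff_continuousAt.mpr fun s => ((hX x).2 s).continuousAt).continuousOn
      (fun s _ => ((hX x).2 s).hasDerivWithinAt)
      (continuous_iff_continuousAt.mpr fun s => ((hX y).2 s).continuousAt).continuousOn
      (fun s _ => ((hX y).2 s).hasDerivWithinAt)
      (by simp [(hX x).1, (hX y).1]) t ⟨ht, le_rfl⟩
    rw [abs_of_nonneg ht]
    simpa using this
  · have hneg : ∀ z : Fin d → ℝ, ∀ s : ℝ,
        HasDerivAt (fun u => X (-u) z) (-(b (X (-s) z))) s := by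
      intro z s
      have h2 : HasDerivAt (fun v => X v z) (b (X (-s) z)) (-s) := (hX z).2 (-s)
      have := h2.scomp s (hasDerivAt_neg s)
      simpa [Function.comp_def] using this
    have hbneg : LipschitzWith K (fun y => -(b y)) :=
      LipschitzWith.of_dist_le_mul fun a b' => by
        simpa [dist_neg_neg] using hb.dist_le_mul a b'
    have := dist_le_of_trajectories_ODE (v := fun _ y => -(b y)) (fun _ => hbneg)
      (f := fun s => X (-s) x) (g := fun s => X (-s) y) (a := 0) (b := -t) (δ := dist x y)
      (continuous_iff_continuousAt.mpr fun s => (hneg x s).continuousAt).continuousOn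
      (fun s _ => (hneg x s).hasDerivWithinAt)
      (continuous_iff_continuousAt.mpr fun s => (hneg y s).continuousAt).continuousOn
      (fun s _ => (hneg y s).hasDerivWithinAt)
      (by simp [(hX x).1, (hX y).1]) (-t) ⟨by linarith, le_rfl⟩
    rw [abs_of_neg ht]
    simpa using this

theorem flow_lipschitz {b : (Fin d → ℝ) → (Fin d → ℝ)} {K : ℝ≥0} (hb : LipschitzWith K b)
    {X : ℝ → (Fin d → ℝ) → (Fin d → ℝ)} (hX : IsFlowOf b X) (t : ℝ) :
    LipschitzWith (Real.exp (K * |t|)).toNNReal (X t) :=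
  LipschitzWith.of_dist_le_mul fun x y => by
    rw [Real.coe_toNNReal _ (Real.exp_nonneg _), mul_comm]
    exact flow_dist hb hX t x y


theorem key_deriv {Φ : (Fin d → ℝ) → (Fin d → ℝ)} (hΦ : ContDiff ℝ 1 Φ) (hΦper : ZdPeriodic Φ)
    {ρ : (Fin d → ℝ) → ℝ} (hρ : ContDiff ℝ 1 ρ) (hρper : ZdPeriodic ρ)
    {r : (Fin d → ℝ) → ℝ} (hr : ContDiff ℝ 1 r) (hrper : ZdPeriodic r) (hrpos : ∀ y, 0 < r y)
    {X X' : ℝ → (Fin d → ℝ) → (Fin d → ℝ)}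
    (hX : IsFlowOf (fun y => ρ y • Φ y) X) (hX' : IsFlowOf (fun y => r y • Φ y) X')
    {ψ : (Fin d → ℝ) → ℝ} (hψ : ContDiff ℝ 1 ψ) (hψper : ZdPeriodic ψ) (t s : ℝ)
    (y : Fin d → ℝ) :
    HasDerivAt (fun s' => ψ (X' t (X s' y)))
      ((ρ (X s y) / r (X s y)) *
        fderiv ℝ ψ (X' t (X s y)) (r (X' t (X s y)) • Φ (X' t (X s y)))) s := by
  have hb'per : ZdPeriodic (fun y => r y • Φ y) := fun κ x => by
    simp only [hrper κ x, hΦper κ x]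
  obtain ⟨K', hK'⟩ := per_lipschitz (hr.smul hΦ) hb'per
  obtain ⟨Kψ, hKψ⟩ := per_lipschitz hψ hψper
  set z := X s y with hz
  set a := ρ z / r z with ha
  have hu : HasDerivAt (fun s' => X s' y) (ρ z • Φ z) s := by simpa using (hX y).2 s
  have h0' : HasDerivAt (fun τ => X' τ z) (r z • Φ z) (a * (s - s)) := by
    have h := (hX' z).2 0
    rw [(hX' z).1] at h
    simpa using h
  have hin : HasDerivAt (fun s' => a * (s' - s)) a s := by
    simpa using ((hasDerivAt_id s).sub_const s).const_mul a
  have hv : HasDerivAt (fun s' => X' (a * (s' - s)) z) (a • (r z • Φ z)) s := by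
    have := h0'.scomp s hin
    simpa [Function.comp_def] using this
  have hvv : HasDerivAt (fun s' => X' (a * (s' - s)) z) (ρ z • Φ z) s := by
    have hval : a • (r z • Φ z) = ρ z • Φ z := by
      rw [smul_smul, ha, div_mul_cancel₀ _ (hrpos z).ne']
    rwa [hval] at hv
  have hw : HasDerivAt (fun s' => X s' y - X' (a * (s' - s)) z) 0 s := by
    simpa [Pi.sub_def] using hu.sub hvv
  have hwo : (fun s' => X s' y - X' (a * (s' - s)) z) =o[𝓝 s] fun s' => s' - s := by
    have := hasDerivAt_iff_isLittleO.mp hw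
    simpa [← hz, (hX' z).1] using this
  have hL : LipschitzWith (Kψ * (Real.exp (K' * |t|)).toNNReal) (fun w => ψ (X' t w)) :=
    hKψ.comp (flow_lipschitz hK' hX' t)
  have hgl : ∀ τ : ℝ, X' t (X' τ z) = X' (t + τ) z := fun τ => (flow_add hK' hX' τ z t).symm
  have hLψt : HasDerivAt (fun τ => ψ (X' τ z))
      (fderiv ℝ ψ (X' t z) (r (X' t z) • Φ (X' t z))) t := by
    have h1 := (hX' z).2 t
    have := ((hψ.differentiable one_ne_zero) (X' t z)).hasFDerivAt.comp_hasDerivAt t h1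
    simpa [Function.comp_def] using this
  have hinn2 : HasDerivAt (fun s' => t + a * (s' - s)) a s := hin.const_add t
  have hg : HasDerivAt (fun s' => ψ (X' (t + a * (s' - s)) z))
      (a * fderiv ℝ ψ (X' t z) (r (X' t z) • Φ (X' t z))) s := by
    have h1 : HasDerivAt (fun τ => ψ (X' τ z))
        (fderiv ℝ ψ (X' t z) (r (X' t z) • Φ (X' t z))) (t + a * (s - s)) := by
      simpa using hLψt
    have := h1.scomp s hinn2
    simpa [Function.comp_def, smul_eq_mul] using this
  have hdiff : (fun s' => ψ (X' t (X s' y)) - ψ (X' (t + a * (s' - s)) z)) =o[𝓝 s]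
      fun s' => s' - s := by
    refine Asymptotics.IsBigO.trans_isLittleO
      (Asymptotics.isBigO_of_le' (c := ((Kψ * (Real.exp (K' * |t|)).toNNReal : ℝ≥0) : ℝ))
        _ fun s' => ?_) hwo
    have h2 := hL.dist_le_mul (X s' y) (X' (a * (s' - s)) z)
    rw [hgl (a * (s' - s))] at h2
    simpa [Real.norm_eq_abs, Real.dist_eq, dist_eq_norm] using h2
  have hrem : HasDerivAt
      (fun s' => ψ (X' t (X s' y)) - ψ (X' (t + a * (s' - s)) z)) 0 s := by
    rw [hasDerivAt_iff_isLittleO]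
    simpa [← hz, (hX' z).1] using hdiff
  have hfin := hg.add hrem
  simpa [Pi.add_def] using hfin

theorem core {Φ : (Fin d → ℝ) → (Fin d → ℝ)} (hΦ : ContDiff ℝ 1 Φ) (hΦper : ZdPeriodic Φ)
    {ρ : (Fin d → ℝ) → ℝ} (hρ : ContDiff ℝ 1 ρ) (hρper : ZdPeriodic ρ)
    {r : (Fin d → ℝ) → ℝ} (hr : ContDiff ℝ 1 r) (hrper : ZdPeriodic r) (hrpos : ∀ y, 0 < r y)
    {X X' : ℝ → (Fin d → ℝ) → (Fin d → ℝ)}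
    (hX : IsFlowOf (fun y => ρ y • Φ y) X) (hX' : IsFlowOf (fun y => r y • Φ y) X')
    {μ : Measure (Fin d → ℝ)} (hμ : IsProbabilityMeasure μ) (hinv : FlowInvariant X μ)
    {ψ : (Fin d → ℝ) → ℝ} (hψ : ContDiff ℝ 1 ψ) (hψper : ZdPeriodic ψ) (t : ℝ) :
    ∫ y, (ρ y / r y) * ψ (X' t y) ∂μ = ∫ y, (ρ y / r y) * ψ y ∂μ := by
  haveI := hμ
  have hrne : ∀ y, r y ≠ 0 := fun y => (hrpos y).ne'
  have hqc : Continuous (fun y => ρ y / r y) := hρ.continuous.div hr.continuous hrne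
  have hqper : ZdPeriodic fun y => ρ y / r y := fun κ x => by
    simp only [hρper κ x, hrper κ x]
  obtain ⟨Cq, hCq0, hCq⟩ := per_bound hqc hqper
  have hbper : ZdPeriodic (fun y => ρ y • Φ y) := fun κ x => by
    simp only [hρper κ x, hΦper κ x]
  have hb'per : ZdPeriodic (fun y => r y • Φ y) := fun κ x => by
    simp only [hrper κ x, hΦper κ x]
  obtain ⟨Kb, hKb⟩ := per_lipschitz (hρ.smul hΦ) hbper
  obtain ⟨Kb', hKb'⟩ := per_lipschitz (hr.smul hΦ) hb'per
  set Lψ : (Fin d → ℝ) → ℝ := fun w => fderiv ℝ ψ w (r w • Φ w) with hLψdef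
  have hLψc : Continuous Lψ :=
    (hψ.continuous_fderiv one_ne_zero).clm_apply (hr.continuous.smul hΦ.continuous)
  have hLψper : ZdPeriodic Lψ := by
    intro κ x
    have hfd := per_fderiv (hψ.differentiable one_ne_zero) hψper κ x
    simp only at hfd
    simp only [hLψdef, hfd, hrper κ x, hΦper κ x]
  obtain ⟨CL, hCL0, hCL⟩ := per_bound hLψc hLψper
  have hXc : ∀ s : ℝ, Continuous (X s) := fun s => (flow_lipschitz hKb hX s).continuous
  have hX'c : ∀ s : ℝ, Continuous (X' s) := fun s => (flow_lipschitz hKb' hX' s).continuous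
  have hψc := hψ.continuous
  obtain ⟨Cψ, hCψ0, hCψ⟩ := per_bound hψc hψper
  have heq0 : ∀ y, X 0 y = y := fun y => (hX y).1
  have heq0' : ∀ y, X' 0 y = y := fun y => (hX' y).1
  -- Step 1: the weak divergence-free identity
  have step1 : ∀ u : ℝ, ∫ y, (ρ y / r y) * Lψ (X' u y) ∂μ = 0 := by
    intro u
    have hφc : Continuous (fun w => ψ (X' u w)) := hψc.comp (hX'c u)
    have hφper : ZdPeriodic (fun w => ψ (X' u w)) := fun κ x => by
      simp only [flow_periodic hKb' hb'per hX' u x κ, hψper κ (X' u x)]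
    have hconst : ∀ s : ℝ, ∫ y, ψ (X' u (X s y)) ∂μ = ∫ y, ψ (X' u y) ∂μ := fun s =>
      hinv s _ hφc hφper
    have hd := hasDerivAt_integral_of_dominated_loc_of_deriv_le (Metric.ball_mem_nhds _ one_pos)
      (F := fun s y => ψ (X' u (X s y)))
      (F' := fun s y => (ρ (X s y) / r (X s y)) * Lψ (X' u (X s y)))
      (μ := μ) (x₀ := 0) (bound := fun _ => Cq * CL)
      (.of_forall fun s => (hφc.comp (hXc s)).aestronglyMeasurable)
      (by
        refine (integrable_const Cψ).mono'
          ((hφc.comp (hXc 0)).aestronglyMeasurable) (.of_forall fun y => ?_)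
        exact hCψ _)
      ((hqc.comp (hXc 0)).mul (hLψc.comp ((hX'c u).comp (hXc 0)))).aestronglyMeasurable
      (.of_forall fun y s _ => by
        calc ‖(ρ (X s y) / r (X s y)) * Lψ (X' u (X s y))‖
            = ‖ρ (X s y) / r (X s y)‖ * ‖Lψ (X' u (X s y))‖ := norm_mul _ _
          _ ≤ Cq * CL := mul_le_mul (hCq _) (hCL _) (norm_nonneg _) hCq0)
      (integrable_const _)
      (.of_forall fun y s _ =>
        key_deriv hΦ hΦper hρ hρper hr hrper hrpos hX hX' hψ hψper u s y)
    have hzero : HasDerivAt (fun s => ∫ y, ψ (X' u (X s y)) ∂μ) 0 0 := by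
      have hF : (fun s => ∫ y, ψ (X' u (X s y)) ∂μ) = fun _ => ∫ y, ψ (X' u y) ∂μ :=
        funext hconst
      rw [hF]
      exact hasDerivAt_const 0 _
    have hkey := hd.2.unique hzero
    simpa only [heq0] using hkey
  -- Step 2
  have hG : ∀ u : ℝ, HasDerivAt (fun v => ∫ y, (ρ y / r y) * ψ (X' v y) ∂μ)
      (∫ y, (ρ y / r y) * Lψ (X' u y) ∂μ) u := by
    intro u
    have hd := hasDerivAt_integral_of_dominated_loc_of_deriv_le (Metric.ball_mem_nhds _ one_pos)
      (F := fun v y => (ρ y / r y) * ψ (X' v y))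
      (F' := fun v y => (ρ y / r y) * Lψ (X' v y))
      (μ := μ) (x₀ := u) (bound := fun _ => Cq * CL)
      (.of_forall fun v => (hqc.mul (hψc.comp (hX'c v))).aestronglyMeasurable)
      (by
        refine (integrable_const (Cq * Cψ)).mono'
          ((hqc.mul (hψc.comp (hX'c u))).aestronglyMeasurable) (.of_forall fun y => ?_)
        calc ‖(ρ y / r y) * ψ (X' u y)‖ = ‖ρ y / r y‖ * ‖ψ (X' u y)‖ := norm_mul _ _
          _ ≤ Cq * Cψ := mul_le_mul (hCq _) (hCψ _) (norm_nonneg _) hCq0)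
      ((hqc.mul (hLψc.comp (hX'c u))).aestronglyMeasurable)
      (.of_forall fun y v _ => by
        calc ‖(ρ y / r y) * Lψ (X' v y)‖ = ‖ρ y / r y‖ * ‖Lψ (X' v y)‖ := norm_mul _ _
          _ ≤ Cq * CL := mul_le_mul (hCq _) (hCL _) (norm_nonneg _) hCq0)
      (integrable_const _)
      (.of_forall fun y v _ => by
        have h1 := (hX' y).2 v
        have h2 := ((hψ.differentiable one_ne_zero) (X' v y)).hasFDerivAt.comp_hasDerivAt v h1
        have h3 : HasDerivAt (fun τ => ψ (X' τ y)) (Lψ (X' v y)) v := h2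
        exact h3.const_mul _)
    exact hd.2
  have hGconst : ∀ u : ℝ, (∫ y, (ρ y / r y) * ψ (X' u y) ∂μ)
      = ∫ y, (ρ y / r y) * ψ (X' 0 y) ∂μ := by
    intro u
    exact is_const_of_deriv_eq_zero
      (fun v => ((hG v).differentiableAt : DifferentiableAt ℝ _ v))
      (fun v => by rw [(hG v).deriv, step1 v]) u 0
  have := hGconst t
  simpa only [heq0'] using this

theorem smooth_approx {ψ : (Fin d → ℝ) → ℝ} (hψ : Continuous ψ) (hper : ZdPeriodic ψ)
    {C : ℝ} (hC : ∀ x, ‖ψ x‖ ≤ C) :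
    ∃ Ψ : ℕ → (Fin d → ℝ) → ℝ, (∀ n, ContDiff ℝ 1 (Ψ n)) ∧ (∀ n, ZdPeriodic (Ψ n)) ∧
      (∀ n x, ‖Ψ n x‖ ≤ C) ∧ ∀ x, Tendsto (fun n => Ψ n x) atTop (𝓝 (ψ x)) := by
  have hpos : ∀ n : ℕ, (0:ℝ) < 1/(n+1) := fun n => by positivity
  let φ : ℕ → ContDiffBump (0 : Fin d → ℝ) := fun n =>
    { rIn := 1/(n+1), rOut := 2/(n+1), rIn_pos := hpos n,
      rIn_lt_rOut := by
        have : (0:ℝ) < (n:ℝ)+1 := by positivity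
        rw [div_lt_div_iff₀ this this]; nlinarith }
  refine ⟨fun n => (φ n).normed volume ⋆[ContinuousLinearMap.lsmul ℝ ℝ, volume] ψ,
    fun n => ?_, fun n κ x => ?_, fun n x => ?_, fun x => ?_⟩
  · exact (φ n).hasCompactSupport_normed.contDiff_convolution_left _
      ((φ n).contDiff_normed) (hψ.locallyIntegrable)
  · simp only
    rw [convolution_def, convolution_def]
    congr 1
    funext tt
    simp only [ContinuousLinearMap.lsmul_apply]
    have hx : x + (fun i => ((κ i : ℤ) : ℝ)) - tt = (x - tt) + fun i => ((κ i : ℤ) : ℝ) := by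
      abel
    rw [hx, hper κ (x - tt)]
  · simp only
    rw [convolution_def]
    have hcont : Continuous fun tt => (φ n).normed volume tt • ψ (x - tt) :=
      ((φ n).continuous_normed).smul (hψ.comp (continuous_const.sub continuous_id))
    have hcs : HasCompactSupport fun tt => (φ n).normed volume tt • ψ (x - tt) :=
      ((φ n).hasCompactSupport_normed).smul_right
    have hint : Integrable (fun tt => (φ n).normed volume tt • ψ (x - tt)) volume :=
      hcont.integrable_of_hasCompactSupport hcs
    calc ‖∫ tt, ContinuousLinearMap.lsmul ℝ ℝ ((φ n).normed volume tt) (ψ (x - tt))‖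
        ≤ ∫ tt, ‖(φ n).normed volume tt • ψ (x - tt)‖ := norm_integral_le_integral_norm _
      _ ≤ ∫ tt, (φ n).normed volume tt * C := by
          refine integral_mono hint.norm (((φ n).integrable_normed).mul_const C) fun tt => ?_
          calc ‖(φ n).normed volume tt • ψ (x - tt)‖
              = (φ n).normed volume tt * ‖ψ (x - tt)‖ := by
                rw [norm_smul, Real.norm_of_nonneg ((φ n).nonneg_normed tt)]
            _ ≤ (φ n).normed volume tt * C :=
                mul_le_mul_of_nonneg_left (hC _) ((φ n).nonneg_normed tt)
      _ = C := by rw [integral_mul_const, (φ n).integral_normed, one_mul]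
  · refine ContDiffBump.convolution_tendsto_right_of_continuous ?_ hψ x
    have h2 : Tendsto (fun n : ℕ => 2 * (1/((n:ℝ)+1))) atTop (𝓝 (2 * 0)) :=
      tendsto_one_div_add_atTop_nhds_zero_nat.const_mul 2
    simp only [mul_zero] at h2
    convert h2 using 2 with n
    show 2/((n:ℝ)+1) = 2 * (1/((n:ℝ)+1))
    ring

theorem cont_core {Φ : (Fin d → ℝ) → (Fin d → ℝ)} (hΦ : ContDiff ℝ 1 Φ) (hΦper : ZdPeriodic Φ)
    {ρ : (Fin d → ℝ) → ℝ} (hρ : ContDiff ℝ 1 ρ) (hρper : ZdPeriodic ρ)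
    {r : (Fin d → ℝ) → ℝ} (hr : ContDiff ℝ 1 r) (hrper : ZdPeriodic r) (hrpos : ∀ y, 0 < r y)
    {X X' : ℝ → (Fin d → ℝ) → (Fin d → ℝ)}
    (hX : IsFlowOf (fun y => ρ y • Φ y) X) (hX' : IsFlowOf (fun y => r y • Φ y) X')
    {μ : Measure (Fin d → ℝ)} (hμ : IsProbabilityMeasure μ) (hinv : FlowInvariant X μ)
    {ψ : (Fin d → ℝ) → ℝ} (hψc : Continuous ψ) (hψper : ZdPeriodic ψ) (t : ℝ) :
    ∫ y, (ρ y / r y) * ψ (X' t y) ∂μ = ∫ y, (ρ y / r y) * ψ y ∂μ := by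
  haveI := hμ
  have hrne : ∀ y, r y ≠ 0 := fun y => (hrpos y).ne'
  have hqc : Continuous (fun y => ρ y / r y) := hρ.continuous.div hr.continuous hrne
  have hqper : ZdPeriodic fun y => ρ y / r y := fun κ x => by
    simp only [hρper κ x, hrper κ x]
  obtain ⟨Cq, hCq0, hCq⟩ := per_bound hqc hqper
  have hb'per : ZdPeriodic (fun y => r y • Φ y) := fun κ x => by
    simp only [hrper κ x, hΦper κ x]
  obtain ⟨Kb', hKb'⟩ := per_lipschitz (hr.smul hΦ) hb'per
  have hX'c : ∀ s : ℝ, Continuous (X' s) := fun s => (flow_lipschitz hKb' hX' s).continuous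
  obtain ⟨Cψ, hCψ0, hCψ⟩ := per_bound hψc hψper
  obtain ⟨Ψ, hΨcd, hΨper, hΨb, hΨt⟩ := smooth_approx hψc hψper hCψ
  have hbd : ∀ (g : (Fin d → ℝ) → ℝ), (∀ x, ‖g x‖ ≤ Cψ) → ∀ᵐ y ∂μ,
      ‖(ρ y / r y) * g y‖ ≤ Cq * Cψ := by
    intro g hg
    refine Filter.Eventually.of_forall fun y => ?_
    calc ‖(ρ y / r y) * g y‖ = ‖ρ y / r y‖ * ‖g y‖ := norm_mul _ _
      _ ≤ Cq * Cψ := mul_le_mul (hCq _) (hg _) (norm_nonneg _) hCq0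
  have h1 : Tendsto (fun n => ∫ y, (ρ y / r y) * Ψ n (X' t y) ∂μ) atTop
      (𝓝 (∫ y, (ρ y / r y) * ψ (X' t y) ∂μ)) := by
    refine tendsto_integral_of_dominated_convergence (fun _ => Cq * Cψ)
      (fun n => (hqc.mul ((hΨcd n).continuous.comp (hX'c t))).aestronglyMeasurable)
      (integrable_const _) (fun n => hbd _ (fun x => hΨb n (X' t x))) ?_
    exact Filter.Eventually.of_forall fun y => (hΨt (X' t y)).const_mul _
  have h2 : Tendsto (fun n => ∫ y, (ρ y / r y) * Ψ n y ∂μ) atTop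
      (𝓝 (∫ y, (ρ y / r y) * ψ y ∂μ)) := by
    refine tendsto_integral_of_dominated_convergence (fun _ => Cq * Cψ)
      (fun n => (hqc.mul (hΨcd n).continuous).aestronglyMeasurable)
      (integrable_const _) (fun n => hbd _ (fun x => hΨb n x)) ?_
    exact Filter.Eventually.of_forall fun y => (hΨt y).const_mul _
  have heqn : ∀ n, ∫ y, (ρ y / r y) * Ψ n (X' t y) ∂μ = ∫ y, (ρ y / r y) * Ψ n y ∂μ :=
    fun n => core hΦ hΦper hρ hρper hr hrper hrpos hX hX' hμ hinv (hΨcd n) (hΨper n) t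
  refine tendsto_nhds_unique h1 ?_
  exact (funext heqn : (fun n => ∫ y, (ρ y / r y) * Ψ n (X' t y) ∂μ) = _) ▸ h2
end Aux


/-- If `μ` is an invariant probability measure for the flow of `b = ρΦ` and
`c := ∫ ρ/r dμ > 0` (with `r` positive), then `dμ' := c⁻¹ (ρ/r) dμ` defines a probability
measure which is invariant for the flow associated with `rΦ`. -/
theorem invariant_measure_change_of_density {d : ℕ} (hd : 1 ≤ d)
    (Φ : (Fin d → ℝ) → (Fin d → ℝ)) (hΦ : ContDiff ℝ 1 Φ) (hΦper : ZdPeriodic Φ)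
    (hΦne : ∀ y, Φ y ≠ 0)
    (ρ : (Fin d → ℝ) → ℝ) (hρ : ContDiff ℝ 1 ρ) (hρper : ZdPeriodic ρ) (hρ0 : ∀ y, 0 ≤ ρ y)
    (r : (Fin d → ℝ) → ℝ) (hr : ContDiff ℝ 1 r) (hrper : ZdPeriodic r) (hrpos : ∀ y, 0 < r y)
    (X : ℝ → (Fin d → ℝ) → (Fin d → ℝ)) (hX : IsFlowOf (fun y => ρ y • Φ y) X)
    (X' : ℝ → (Fin d → ℝ) → (Fin d → ℝ)) (hX' : IsFlowOf (fun y => r y • Φ y) X')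
    (μ : Measure (Fin d → ℝ)) (hμ : IsProbabilityMeasure μ) (hμc : μ (unitCube d)ᶜ = 0)
    (hinv : FlowInvariant X μ)
    (hc : 0 < ∫ y, ρ y / r y ∂μ) :
    IsProbabilityMeasure
      ((ENNReal.ofReal (∫ y, ρ y / r y ∂μ))⁻¹ •
        μ.withDensity fun y => ENNReal.ofReal (ρ y / r y)) ∧
    FlowInvariant X'
      ((ENNReal.ofReal (∫ y, ρ y / r y ∂μ))⁻¹ •
        μ.withDensity fun y => ENNReal.ofReal (ρ y / r y)) := by
  haveI := hμ
  have hrne : ∀ y, r y ≠ 0 := fun y => (hrpos y).ne'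
  have hqc : Continuous (fun y => ρ y / r y) := hρ.continuous.div hr.continuous hrne
  have hq0 : ∀ y, 0 ≤ ρ y / r y := fun y => div_nonneg (hρ0 y) (hrpos y).le
  have hqper : ZdPeriodic fun y => ρ y / r y := fun κ x => by
    simp only [hρper κ x, hrper κ x]
  obtain ⟨Cq, hCq0, hCq⟩ := per_bound hqc hqper
  have hqint : Integrable (fun y => ρ y / r y) μ :=
    (integrable_const Cq).mono' hqc.aestronglyMeasurable (.of_forall fun y => hCq y)
  have hlint : ∫⁻ y, ENNReal.ofReal (ρ y / r y) ∂μ = ENNReal.ofReal (∫ y, ρ y / r y ∂μ) :=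
    (ofReal_integral_eq_lintegral_ofReal hqint (.of_forall hq0)).symm
  constructor
  · constructor
    rw [Measure.smul_apply, withDensity_apply _ MeasurableSet.univ, setLIntegral_univ, hlint,
      smul_eq_mul, ENNReal.inv_mul_cancel (ENNReal.ofReal_pos.mpr hc).ne' ENNReal.ofReal_ne_top]
  · intro t ψ hψc hψper
    have hmeas : Measurable fun y => (ρ y / r y).toNNReal := hqc.measurable.real_toNNReal
    have hconv : ∀ g : (Fin d → ℝ) → ℝ,
        ∫ y, g y ∂((ENNReal.ofReal (∫ y, ρ y / r y ∂μ))⁻¹ •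
          μ.withDensity fun y => ENNReal.ofReal (ρ y / r y))
        = (ENNReal.ofReal (∫ y, ρ y / r y ∂μ))⁻¹.toReal • ∫ y, (ρ y / r y) * g y ∂μ := by
      intro g
      rw [integral_smul_measure]
      congr 1
      have hof : (fun y => ENNReal.ofReal (ρ y / r y))
          = fun y => ((ρ y / r y).toNNReal : ℝ≥0∞) := rfl
      rw [hof, integral_withDensity_eq_integral_smul hmeas]
      congr 1
      funext y
      rw [NNReal.smul_def, Real.coe_toNNReal _ (hq0 y), smul_eq_mul]
    rw [hconv (fun y => ψ (X' t y)), hconv ψ]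
    congr 1
    exact cont_core hΦ hΦper hρ hρper hr hrper hrpos hX hX' hμ hinv hψc hψper t
end
end

section
/- Let Φ ∈ C¹_♯(Y_d)^d vanish nowhere. Then the set {ρ ∈ C¹_♯(Y_d) : ρ > 0 everywhere and the rotation set C_{ρΦ} is a singleton} is closed in {ρ ∈ C¹_♯(Y_d) : ρ > 0 everywhere} for the topology of uniform convergence on ℝ^d: if (ρ_n) is a sequence of everywhere positive functions in C¹_♯(Y_d) with C_{ρ_nΦ} a singleton for each n, and (ρ_n) converges uniformly to an everywhere positive ρ ∈ C¹_♯(Y_d), then C_{ρΦ} is a singleton. -/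
open MeasureTheory Filter Matrix

noncomputable section

namespace RotAux



variable {d : ℕ}

lemma mem_Icc_fract (y : Fin d → ℝ) :
    (fun i => Int.fract (y i)) ∈ Set.Icc (0 : Fin d → ℝ) 1 := by
  constructor <;> intro i
  · exact Int.fract_nonneg _
  · exact (Int.fract_lt_one _).le

lemma zd_eq_fract {E : Type*} {f : (Fin d → ℝ) → E} (hf : ZdPeriodic f) (y : Fin d → ℝ) :
    f y = f (fun i => Int.fract (y i)) := by
  have h := hf (fun i => ⌊y i⌋) (fun i => Int.fract (y i))
  have hx : ((fun i => Int.fract (y i)) + fun i => ((⌊y i⌋ : ℤ) : ℝ)) = y := by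
    funext i
    simp only [Pi.add_apply]
    exact Int.fract_add_floor (y i)
  rw [hx] at h
  exact h

lemma bound_of_periodic {F : Type*} [NormedAddCommGroup F] {f : (Fin d → ℝ) → F}
    (hc : Continuous f) (hp : ZdPeriodic f) : ∃ M : ℝ, 0 ≤ M ∧ ∀ y, ‖f y‖ ≤ M := by
  obtain ⟨C, hC⟩ := (isCompact_Icc (a := (0 : Fin d → ℝ)) (b := 1)).exists_bound_of_continuousOn
    hc.continuousOn
  refine ⟨max C 0, le_max_right _ _, fun y => ?_⟩
  rw [zd_eq_fract hp y]
  exact le_trans (hC _ (mem_Icc_fract y)) (le_max_left _ _)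

lemma pos_lower_bound {f : (Fin d → ℝ) → ℝ} (hc : Continuous f) (hp : ZdPeriodic f)
    (hpos : ∀ y, 0 < f y) : ∃ c : ℝ, 0 < c ∧ ∀ y, c ≤ f y := by
  obtain ⟨x₀, _, hmin⟩ := (isCompact_Icc (a := (0 : Fin d → ℝ)) (b := 1)).exists_isMinOn
    ⟨0, by constructor <;> intro i <;> norm_num⟩ hc.continuousOn
  refine ⟨f x₀, hpos x₀, fun y => ?_⟩
  rw [zd_eq_fract hp y]
  exact hmin (mem_Icc_fract y)

lemma lipschitz_of_contDiff_periodic {f : (Fin d → ℝ) → (Fin d → ℝ)}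
    (hf : ContDiff ℝ 1 f) (hp : ZdPeriodic f) : ∃ K : NNReal, LipschitzWith K f := by
  have hdiff : Differentiable ℝ f := hf.differentiable one_ne_zero
  have hdper : ZdPeriodic (fun y => fderiv ℝ f y) := by
    intro κ x
    have h1 : (fun y => f (y + fun i => ((κ i : ℤ) : ℝ))) = f := funext fun y => hp κ y
    have h2 : HasFDerivAt (fun y => f (y + fun i => ((κ i : ℤ) : ℝ)))
        (fderiv ℝ f (x + fun i => ((κ i : ℤ) : ℝ))) x := by
      have := ((hdiff (x + fun i => ((κ i : ℤ) : ℝ))).hasFDerivAt).comp x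
        ((hasFDerivAt_id x).add_const (fun i => ((κ i : ℤ) : ℝ)))
      simpa using this
    rw [h1] at h2
    exact h2.fderiv.symm
  obtain ⟨M, hM0, hM⟩ := bound_of_periodic (hf.continuous_fderiv one_ne_zero) hdper
  refine ⟨M.toNNReal, lipschitzWith_of_nnnorm_fderiv_le hdiff (fun x => ?_)⟩
  rw [← norm_toNNReal]
  exact Real.toNNReal_mono (hM x)


variable {d : ℕ} {b : (Fin d → ℝ) → (Fin d → ℝ)} {K : NNReal}
  {X : ℝ → (Fin d → ℝ) → (Fin d → ℝ)}

lemma flow_unique (hb : LipschitzWith K b) {f g : ℝ → Fin d → ℝ}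
    (hf : ∀ t, HasDerivAt f (b (f t)) t) (hg : ∀ t, HasDerivAt g (b (g t)) t)
    {t₀ : ℝ} (h0 : f t₀ = g t₀) : f = g := by
  funext t
  have hmem : t₀ ∈ Set.Ioo (min t t₀ - 1) (max t t₀ + 1) :=
    ⟨by have := min_le_right t t₀; linarith, by have := le_max_right t t₀; linarith⟩
  have := ODE_solution_unique_of_mem_Icc (v := fun _ x => b x) (s := fun _ => Set.univ)
    (fun _ _ => hb.lipschitzOnWith) hmem
    (fun u _ => (hf u).continuousAt.continuousWithinAt)
    (fun u _ => hf u) (fun _ _ => trivial)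
    (fun u _ => (hg u).continuousAt.continuousWithinAt)
    (fun u _ => hg u) (fun _ _ => trivial) h0
  exact this ⟨by have := min_le_left t t₀; linarith, by have := le_max_left t t₀; linarith⟩

lemma flow_add (hb : LipschitzWith K b) (hX : IsFlowOf b X) (s t : ℝ) (y : Fin d → ℝ) :
    X (s + t) y = X s (X t y) := by
  have hf : ∀ u : ℝ, HasDerivAt (fun r => X (r + t) y) (b (X (u + t) y)) u := by
    intro u
    exact HasDerivAt.comp_add_const u t ((hX y).2 (u + t))
  have heq := flow_unique hb hf (fun u => (hX (X t y)).2 u) (t₀ := 0)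
    (by rw [zero_add, (hX (X t y)).1])
  exact congrFun heq s

lemma flow_periodic (hb : LipschitzWith K b) (hX : IsFlowOf b X) (hbp : ZdPeriodic b)
    (t : ℝ) (κ : Fin d → ℤ) (y : Fin d → ℝ) :
    X t (y + fun i => (κ i : ℝ)) = X t y + fun i => (κ i : ℝ) := by
  have hg : ∀ u : ℝ, HasDerivAt (fun r => X r y + fun i => ((κ i : ℤ) : ℝ))
      (b (X u y + fun i => ((κ i : ℤ) : ℝ))) u := by
    intro u
    rw [hbp κ (X u y)]
    exact ((hX y).2 u).add_const _
  have heq := flow_unique (f := fun r => X r (y + fun i => ((κ i : ℤ) : ℝ))) hb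
    (fun u => (hX (y + fun i => ((κ i : ℤ) : ℝ))).2 u) hg (t₀ := 0)
    (by show X 0 (y + fun i => ((κ i : ℤ) : ℝ)) = X 0 y + fun i => ((κ i : ℤ) : ℝ)
        rw [(hX (y + fun i => ((κ i : ℤ) : ℝ))).1, (hX y).1])
  exact congrFun heq t

lemma flow_dist (hb : LipschitzWith K b) (hX : IsFlowOf b X) (t : ℝ) (y y' : Fin d → ℝ) :
    dist (X t y) (X t y') ≤ dist y y' * Real.exp (K * |t|) := by
  rcases le_or_gt 0 t with ht | ht
  · have := dist_le_of_trajectories_ODE (v := fun _ x => b x) (K := K)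
      (fun _ => hb) (f := fun s => X s y) (g := fun s => X s y') (a := 0) (b := t)
      (δ := dist y y')
      (fun u _ => ((hX y).2 u).continuousAt.continuousWithinAt)
      (fun u _ => ((hX y).2 u).hasDerivWithinAt)
      (fun u _ => ((hX y').2 u).continuousAt.continuousWithinAt)
      (fun u _ => ((hX y').2 u).hasDerivWithinAt)
      (by show dist (X 0 y) (X 0 y') ≤ dist y y'; rw [(hX y).1, (hX y').1]) t ⟨ht, le_rfl⟩
    simpa [abs_of_nonneg ht] using this
  · have hb' : LipschitzWith K (fun x => -(b x)) :=
      LipschitzWith.of_dist_le_mul (fun a c => by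
        simpa [dist_neg_neg] using hb.dist_le_mul a c)
    have hf : ∀ (z : Fin d → ℝ) (u : ℝ), HasDerivAt (fun s => X (-s) z) (-(b (X (-u) z))) u := by
      intro z u
      have h1 := (hX z).2 (-u)
      have h2 := HasDerivAt.scomp u h1 (hasDerivAt_neg u)
      simpa [Function.comp_def] using h2
    have := dist_le_of_trajectories_ODE (v := fun _ x => -(b x)) (K := K)
      (fun _ => hb') (f := fun s => X (-s) y) (g := fun s => X (-s) y') (a := 0) (b := -t)
      (δ := dist y y')
      (fun u _ => (hf y u).continuousAt.continuousWithinAt)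
      (fun u _ => (hf y u).hasDerivWithinAt)
      (fun u _ => (hf y' u).continuousAt.continuousWithinAt)
      (fun u _ => (hf y' u).hasDerivWithinAt)
      (by show dist (X (-0) y) (X (-0) y') ≤ dist y y'
          rw [neg_zero, (hX y).1, (hX y').1]) (-t) ⟨by linarith, le_rfl⟩
    simpa [abs_of_neg ht] using this

lemma flow_t_dist (hX : IsFlowOf b X) {L : ℝ} (hL : ∀ z, ‖b z‖ ≤ L) (t t' : ℝ)
    (y : Fin d → ℝ) : dist (X t y) (X t' y) ≤ L * |t - t'| := by
  have := Convex.norm_image_sub_le_of_norm_hasDerivWithin_le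
    (f := fun s => X s y) (C := L) (s := Set.univ)
    (fun u _ => ((hX y).2 u).hasDerivWithinAt) (fun u _ => hL _)
    convex_univ (Set.mem_univ t') (Set.mem_univ t)
  rw [dist_eq_norm]
  simpa [Real.norm_eq_abs] using this

lemma flow_cont_y (hb : LipschitzWith K b) (hX : IsFlowOf b X) (t : ℝ) :
    Continuous fun y => X t y := by
  have : LipschitzWith (Real.exp (K * |t|)).toNNReal (fun y => X t y) := by
    apply LipschitzWith.of_dist_le_mul
    intro y y'
    rw [Real.coe_toNNReal _ (Real.exp_nonneg _)]
    calc dist (X t y) (X t y') ≤ dist y y' * Real.exp (K * |t|) := flow_dist hb hX t y y'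
    _ = Real.exp (K * |t|) * dist y y' := mul_comm _ _
  exact this.continuous

lemma flow_joint_cont (hb : LipschitzWith K b) (hX : IsFlowOf b X)
    (hbc : Continuous b) (hbp : ZdPeriodic b) :
    Continuous fun p : ℝ × (Fin d → ℝ) => X p.1 p.2 := by
  obtain ⟨L, hL0, hL⟩ := bound_of_periodic hbc hbp
  rw [continuous_iff_continuousAt]
  rintro ⟨t₀, y₀⟩
  rw [Metric.continuousAt_iff]
  intro ε hε
  set R := Real.exp (K * (|t₀| + 1)) with hRdef
  have hR0 : 0 < R := Real.exp_pos _
  refine ⟨min 1 (min (ε / (2 * (L + 1))) (ε / (2 * R))), by positivity, ?_⟩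
  rintro ⟨t, y⟩ hdist
  rw [Prod.dist_eq] at hdist
  have hdt : dist t t₀ < min 1 (min (ε / (2 * (L + 1))) (ε / (2 * R))) :=
    lt_of_le_of_lt (le_max_left _ _) hdist
  have hdy : dist y y₀ < min 1 (min (ε / (2 * (L + 1))) (ε / (2 * R))) :=
    lt_of_le_of_lt (le_max_right _ _) hdist
  have hdt1 : |t - t₀| < 1 := lt_of_lt_of_le (by rw [← Real.dist_eq]; exact hdt) (min_le_left _ _)
  have hdt2 : dist t t₀ < ε / (2 * (L + 1)) :=
    lt_of_lt_of_le hdt (le_trans (min_le_right _ _) (min_le_left _ _))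
  have hdy2 : dist y y₀ < ε / (2 * R) :=
    lt_of_lt_of_le hdy (le_trans (min_le_right _ _) (min_le_right _ _))
  have htT : |t| ≤ |t₀| + 1 := by
    have := abs_sub_abs_le_abs_sub t t₀
    linarith
  have hexp : Real.exp (K * |t|) ≤ R := by
    rw [hRdef]
    apply Real.exp_le_exp.mpr
    exact mul_le_mul_of_nonneg_left htT K.coe_nonneg
  have h1 : dist (X t y) (X t y₀) < ε / 2 := by
    have := flow_dist hb hX t y y₀
    have h2 : dist y y₀ * Real.exp ((K : ℝ) * |t|) ≤ dist y y₀ * R :=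
      mul_le_mul_of_nonneg_left hexp dist_nonneg
    have h3 : dist y y₀ * R < (ε / (2 * R)) * R := by
      apply mul_lt_mul_of_pos_right hdy2 hR0
    have h4 : (ε / (2 * R)) * R = ε / 2 := by field_simp
    linarith
  have h2 : dist (X t y₀) (X t₀ y₀) < ε / 2 := by
    have := flow_t_dist hX hL t t₀ y₀
    have h3 : L * |t - t₀| ≤ (L + 1) * dist t t₀ := by
      rw [Real.dist_eq]
      have := abs_nonneg (t - t₀)
      nlinarith
    have h4 : (L + 1) * dist t t₀ < (L + 1) * (ε / (2 * (L + 1))) := by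
      apply mul_lt_mul_of_pos_left hdt2 (by linarith)
    have h5 : (L + 1) * (ε / (2 * (L + 1))) = ε / 2 := by field_simp
    linarith
  calc dist (X t y) (X t₀ y₀) ≤ dist (X t y) (X t y₀) + dist (X t y₀) (X t₀ y₀) :=
        dist_triangle _ _ _
    _ < ε / 2 + ε / 2 := by linarith
    _ = ε := by ring



/-- Inverse of the primitive of a positive bounded continuous function. -/
lemma inverse_primitive {h : ℝ → ℝ} {c₁ : ℝ} (hc : Continuous h) (h0 : 0 < c₁)
    (hlb : ∀ r, c₁ ≤ h r) :
    ∃ σ : ℝ → ℝ, (∀ t, (∫ r in (0:ℝ)..(σ t), h r) = t) ∧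
      (∀ u, σ (∫ r in (0:ℝ)..u, h r) = u) ∧
      (∀ t, HasDerivAt σ ((h (σ t))⁻¹) t) ∧
      (∀ s s', |σ s - σ s'| ≤ |s - s'| / c₁) ∧ σ 0 = 0 := by
  set H : ℝ → ℝ := fun u => ∫ r in (0:ℝ)..u, h r with hHdef
  have hHd : ∀ u, HasDerivAt H (h u) u := fun u =>
    (hc.integral_hasStrictDerivAt 0 u).hasDerivAt
  have hHc : Continuous H := by
    rw [continuous_iff_continuousAt]; exact fun u => (hHd u).continuousAt
  have hpos : ∀ r, 0 < h r := fun r => lt_of_lt_of_le h0 (hlb r)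
  have hH0 : H 0 = 0 := by simp [hHdef]
  have hsub : ∀ u v, H v - H u = ∫ r in u..v, h r := by
    intro u v
    exact (intervalIntegral.integral_interval_sub_left (hc.intervalIntegrable _ _)
      (hc.intervalIntegrable _ _))
  have hlow : ∀ u v, u ≤ v → c₁ * (v - u) ≤ H v - H u := by
    intro u v huv
    rw [hsub]
    calc c₁ * (v - u) = ∫ _ in u..v, c₁ := by
          rw [intervalIntegral.integral_const, smul_eq_mul]; ring
    _ ≤ ∫ r in u..v, h r := intervalIntegral.integral_mono_on huv (intervalIntegrable_const)
        (hc.intervalIntegrable _ _) (fun r _ => hlb r)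
  have hmono : StrictMono H := by
    intro u v huv
    have := hlow u v huv.le
    nlinarith
  have hsurj : ∀ t, ∃ u, H u = t := by
    intro t
    rcases le_or_gt 0 t with ht | ht
    · have h1 : t ≤ H (t / c₁) := by
        have := hlow 0 (t / c₁) (by positivity)
        rw [hH0, sub_zero] at this
        have : c₁ * (t / c₁) = t := by field_simp
        nlinarith [hlow 0 (t / c₁) (by positivity : (0:ℝ) ≤ t / c₁)]
      have := intermediate_value_Icc (by positivity : (0:ℝ) ≤ t / c₁) hHc.continuousOn
      obtain ⟨u, _, hu⟩ := this ⟨by rw [hH0]; exact ht, h1⟩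
      exact ⟨u, hu⟩
    · have h1 : H (t / c₁) ≤ t := by
        have hneg : t / c₁ ≤ 0 := by
          apply div_nonpos_of_nonpos_of_nonneg ht.le h0.le
        have h2 := hlow (t / c₁) 0 hneg
        rw [hH0] at h2
        have h3 : c₁ * (0 - t / c₁) = -t := by field_simp; ring
        linarith
      have := intermediate_value_Icc (div_nonpos_of_nonpos_of_nonneg ht.le h0.le)
        hHc.continuousOn
      obtain ⟨u, _, hu⟩ := this ⟨h1, by rw [hH0]; exact ht.le⟩
      exact ⟨u, hu⟩
  choose σ hσ using hsurj
  have hrinv : ∀ u, σ (H u) = u := fun u => hmono.injective (hσ (H u))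
  have hlip : ∀ s s', |σ s - σ s'| ≤ |s - s'| / c₁ := by
    intro s s'
    rw [le_div_iff₀ h0]
    rcases le_total (σ s') (σ s) with hle | hle
    · have h1 := hlow _ _ hle
      rw [hσ, hσ] at h1
      rw [abs_of_nonneg (by linarith : (0:ℝ) ≤ σ s - σ s'),
          abs_of_nonneg (by nlinarith : (0:ℝ) ≤ s - s')]
      nlinarith
    · have h1 := hlow _ _ hle
      rw [hσ, hσ] at h1
      rw [abs_of_nonpos (by linarith : σ s - σ s' ≤ 0),
          abs_of_nonpos (by nlinarith : s - s' ≤ 0)]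
      nlinarith
  have hσcont : Continuous σ := by
    apply Metric.continuous_iff.mpr
    intro s ε hε
    refine ⟨c₁ * ε, by positivity, fun s' hs' => ?_⟩
    rw [Real.dist_eq] at *
    calc |σ s' - σ s| ≤ |s' - s| / c₁ := hlip s' s
    _ < (c₁ * ε) / c₁ := by gcongr
    _ = ε := by field_simp
  have hσd : ∀ t, HasDerivAt σ ((h (σ t))⁻¹) t := by
    intro t
    apply HasDerivAt.of_local_left_inverse hσcont.continuousAt (hHd (σ t))
      (ne_of_gt (hpos _)) (Eventually.of_forall hσ)
  have hσ0 : σ 0 = 0 := by have := hrinv 0; rwa [hH0] at this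
  exact ⟨σ, hσ, hrinv, hσd, hlip, hσ0⟩


lemma average {d : ℕ} {Xa : ℝ → (Fin d → ℝ) → (Fin d → ℝ)}
    (hjoint : Continuous fun p : ℝ × (Fin d → ℝ) => Xa p.1 p.2)
    {ν : Measure (Fin d → ℝ)} [IsProbabilityMeasure ν]
    (hinv : FlowInvariant Xa ν)
    {φ : (Fin d → ℝ) → ℝ} (hφ : Continuous φ) (hφp : ZdPeriodic φ)
    {S : ℝ} (hS : 0 ≤ S) :
    (∫ y, (∫ s in (0:ℝ)..S, φ (Xa s y)) ∂ν) = S * ∫ y, φ y ∂ν ∧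
      Integrable (fun y => ∫ s in (0:ℝ)..S, φ (Xa s y)) ν := by
  obtain ⟨M, hM0, hM⟩ := bound_of_periodic hφ hφp
  set ν' := volume.restrict (Set.Ioc (0:ℝ) S) with hν'
  haveI : IsFiniteMeasure ν' := by
    constructor
    rw [hν', Measure.restrict_apply_univ, Real.volume_Ioc]
    exact ENNReal.ofReal_lt_top
  have hcont2 : Continuous (Function.uncurry fun (y : Fin d → ℝ) (s : ℝ) => φ (Xa s y)) := by
    apply hφ.comp
    exact hjoint.comp (continuous_snd.prodMk continuous_fst)
  have hint : Integrable (Function.uncurry fun (y : Fin d → ℝ) (s : ℝ) => φ (Xa s y))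
      (ν.prod ν') :=
    ⟨hcont2.aestronglyMeasurable, HasFiniteIntegral.of_bounded (C := M)
      (Eventually.of_forall (fun p => hM _))⟩
  have hswap := integral_integral_swap hint
  have hIoc : ∀ y, (∫ s in (0:ℝ)..S, φ (Xa s y)) = ∫ s, φ (Xa s y) ∂ν' := by
    intro y
    rw [intervalIntegral.integral_of_le hS]
  have hR : (∫ s, (∫ y, φ (Xa s y) ∂ν) ∂ν') = S * ∫ y, φ y ∂ν := by
    have hcng : ∀ s, (∫ y, φ (Xa s y) ∂ν) = ∫ y, φ y ∂ν := fun s => hinv s φ hφ hφp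
    rw [integral_congr_ae (Eventually.of_forall hcng), integral_const,
      hν', measureReal_def, Measure.restrict_apply_univ, Real.volume_Ioc, sub_zero, ENNReal.toReal_ofReal hS,
      smul_eq_mul]
  have hfun : (fun y => ∫ s in (0:ℝ)..S, φ (Xa s y)) = fun y => ∫ s, φ (Xa s y) ∂ν' :=
    funext hIoc
  constructor
  · show (∫ y, (fun y => ∫ s in (0:ℝ)..S, φ (Xa s y)) y ∂ν) = S * ∫ y, φ y ∂ν
    rw [hfun]
    exact hswap.trans hR
  · rw [hfun]
    exact hint.integral_prod_left

lemma transfer {d : ℕ}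
    (Φ : (Fin d → ℝ) → (Fin d → ℝ)) (hΦ : ContDiff ℝ 1 Φ) (hΦper : ZdPeriodic Φ)
    (hΦne : ∀ y, Φ y ≠ 0)
    (ρa ρb : (Fin d → ℝ) → ℝ)
    (hρa : ContDiff ℝ 1 ρa) (hρaper : ZdPeriodic ρa) (hρapos : ∀ y, 0 < ρa y)
    (hρb : ContDiff ℝ 1 ρb) (hρbper : ZdPeriodic ρb) (hρbpos : ∀ y, 0 < ρb y)
    (Xa Xb : ℝ → (Fin d → ℝ) → (Fin d → ℝ))
    (hXa : IsFlowOf (fun y => ρa y • Φ y) Xa) (hXb : IsFlowOf (fun y => ρb y • Φ y) Xb)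
    (ν : Measure (Fin d → ℝ)) (hν : IsProbabilityMeasure ν)
    (hνc : ν (unitCube d)ᶜ = 0) (hinv : FlowInvariant Xa ν) :
    ∃ μ : Measure (Fin d → ℝ), IsProbabilityMeasure μ ∧ μ (unitCube d)ᶜ = 0 ∧
      FlowInvariant Xb μ ∧ (0 < ∫ y, ρa y / ρb y ∂ν) ∧
      ∀ f : (Fin d → ℝ) → (Fin d → ℝ),
        ∫ y, f y ∂μ = (∫ y, ρa y / ρb y ∂ν)⁻¹ • ∫ y, (ρa y / ρb y) • f y ∂ν := by
  haveI := hν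
  have hΦc : Continuous Φ := hΦ.continuous
  have hρac : Continuous ρa := hρa.continuous
  have hρbc : Continuous ρb := hρb.continuous
  have hbac : Continuous fun y => ρa y • Φ y := hρac.smul hΦc
  have hbbc : Continuous fun y => ρb y • Φ y := hρbc.smul hΦc
  have hbaper : ZdPeriodic fun y => ρa y • Φ y := by
    intro κ x
    show ρa (x + fun i => ((κ i : ℤ) : ℝ)) • Φ (x + fun i => ((κ i : ℤ) : ℝ)) = ρa x • Φ x
    rw [hρaper, hΦper]
  have hbbper : ZdPeriodic fun y => ρb y • Φ y := by
    intro κ x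
    show ρb (x + fun i => ((κ i : ℤ) : ℝ)) • Φ (x + fun i => ((κ i : ℤ) : ℝ)) = ρb x • Φ x
    rw [hρbper, hΦper]
  obtain ⟨Ka, hKa⟩ := lipschitz_of_contDiff_periodic (hρa.smul hΦ) hbaper
  obtain ⟨Kb, hKb⟩ := lipschitz_of_contDiff_periodic (hρb.smul hΦ) hbbper
  set w : (Fin d → ℝ) → ℝ := fun y => ρa y / ρb y with hw_def
  have hwc : Continuous w := hρac.div hρbc fun y => (hρbpos y).ne'
  have hwper : ZdPeriodic w := by
    intro κ x
    show ρa (x + fun i => ((κ i : ℤ) : ℝ)) / ρb (x + fun i => ((κ i : ℤ) : ℝ)) = ρa x / ρb x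
    rw [hρaper, hρbper]
  have hwpos : ∀ y, 0 < w y := fun y => div_pos (hρapos y) (hρbpos y)
  obtain ⟨c₁, hc₁, hlb⟩ := pos_lower_bound hwc hwper hwpos
  obtain ⟨c₂, hc₂0, hub'⟩ := bound_of_periodic hwc hwper
  have hub : ∀ y, w y ≤ c₂ := fun y => le_trans (le_abs_self _) (hub' y)
  have hXacont : Continuous fun p : ℝ × (Fin d → ℝ) => Xa p.1 p.2 :=
    flow_joint_cont hKa hXa hbac hbaper
  have hXbcont : ∀ t, Continuous fun y => Xb t y := fun t => flow_cont_y hKb hXb t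
  have hrel : ∀ z, (w z)⁻¹ • (ρa z • Φ z) = ρb z • Φ z := by
    intro z
    have h1 : (w z)⁻¹ * ρa z = ρb z := by
      show (ρa z / ρb z)⁻¹ * ρa z = ρb z
      rw [inv_div, div_mul_cancel₀ _ (hρapos z).ne']
    rw [smul_smul, h1]
  have hbase : ∀ y : Fin d → ℝ, Continuous fun r => w (Xa r y) := fun y =>
    hwc.comp (hXacont.comp (continuous_id.prodMk continuous_const))
  choose σ hσ1 hσ2 hσ3 hσ4 hσ5 using fun y : Fin d → ℝ =>
    inverse_primitive (hbase y) hc₁ fun r => hlb _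
  have hσcont : ∀ y, Continuous (σ y) := by
    intro y
    rw [continuous_iff_continuousAt]
    exact fun r => (hσ3 y r).continuousAt
  -- conjugacy of the two flows
  have hconj : ∀ (t : ℝ) (y : Fin d → ℝ), Xb t y = Xa (σ y t) y := by
    intro t y
    have hg : ∀ u : ℝ, HasDerivAt (fun r => Xa (σ y r) y)
        ((fun z => ρb z • Φ z) (Xa (σ y u) y)) u := by
      intro u
      have h1 := (hXa y).2 (σ y u)
      have h2 := HasDerivAt.scomp u h1 (hσ3 y u)
      rw [Function.comp_def] at h2
      show HasDerivAt (fun r => Xa (σ y r) y) (ρb (Xa (σ y u) y) • Φ (Xa (σ y u) y)) u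
      rw [← hrel (Xa (σ y u) y)]
      exact h2
    have heq := flow_unique hKb (fun u => (hXb y).2 u) hg (t₀ := 0)
      (by show Xb 0 y = Xa (σ y 0) y
          rw [(hXb y).1, hσ5 y, (hXa y).1])
    exact congrFun heq t
  -- cocycle property of the primitives
  have hHcoc : ∀ (y : Fin d → ℝ) (s a : ℝ),
      (∫ r in (0:ℝ)..a, w (Xa r (Xa s y)))
        = (∫ r in (0:ℝ)..(a + s), w (Xa r y)) - ∫ r in (0:ℝ)..s, w (Xa r y) := by
    intro y s a
    have h1 : (∫ r in (0:ℝ)..a, w (Xa r (Xa s y))) = ∫ r in (0:ℝ)..a, w (Xa (r + s) y) := by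
      apply intervalIntegral.integral_congr
      intro r _
      show w (Xa r (Xa s y)) = w (Xa (r + s) y)
      rw [← flow_add hKa hXa r s y]
    rw [h1]
    have h2 := intervalIntegral.integral_comp_add_right (a := (0:ℝ)) (b := a)
      (fun r => w (Xa r y)) s
    rw [h2, zero_add]
    exact (intervalIntegral.integral_interval_sub_left
      ((hbase y).intervalIntegrable _ _) ((hbase y).intervalIntegrable _ _)).symm
  -- cocycle property of the inverses
  have hσcoc : ∀ (y : Fin d → ℝ) (s t : ℝ),
      σ (Xa s y) t + s = σ y (t + ∫ r in (0:ℝ)..s, w (Xa r y)) := by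
    intro y s t
    have h1 : (∫ r in (0:ℝ)..(σ (Xa s y) t + s), w (Xa r y))
        = t + ∫ r in (0:ℝ)..s, w (Xa r y) := by
      have h2 := hHcoc y s (σ (Xa s y) t)
      rw [hσ1 (Xa s y) t] at h2
      linarith
    have h3 := congrArg (σ y) h1
    rw [hσ2 y (σ (Xa s y) t + s)] at h3
    exact h3
  -- the key invariance identity
  have key : ∀ (ψ : (Fin d → ℝ) → ℝ), Continuous ψ → ZdPeriodic ψ → ∀ t : ℝ,
      ∫ y, ψ (Xb t y) * w y ∂ν = ∫ y, ψ y * w y ∂ν := by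
    intro ψ hψc hψp t
    obtain ⟨Mψ, hMψ0, hMψ⟩ := bound_of_periodic hψc hψp
    set φ₁ : (Fin d → ℝ) → ℝ := fun y => ψ (Xb t y) * w y with hφ₁
    set φ₂ : (Fin d → ℝ) → ℝ := fun y => ψ y * w y with hφ₂
    have hφ₁c : Continuous φ₁ := (hψc.comp (hXbcont t)).mul hwc
    have hφ₂c : Continuous φ₂ := hψc.mul hwc
    have hφ₁p : ZdPeriodic φ₁ := by
      intro κ x
      show ψ (Xb t (x + fun i => ((κ i : ℤ) : ℝ))) * w (x + fun i => ((κ i : ℤ) : ℝ))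
        = ψ (Xb t x) * w x
      rw [flow_periodic hKb hXb hbbper t κ x, hψp κ (Xb t x), hwper κ x]
    have hφ₂p : ZdPeriodic φ₂ := by
      intro κ x
      show ψ (x + fun i => ((κ i : ℤ) : ℝ)) * w (x + fun i => ((κ i : ℤ) : ℝ)) = ψ x * w x
      rw [hψp κ x, hwper κ x]
    have hφ₂bd : ∀ z, |φ₂ z| ≤ Mψ * c₂ := by
      intro z
      rw [hφ₂, abs_mul]
      apply mul_le_mul (by rw [← Real.norm_eq_abs]; exact hMψ z)
        (by rw [abs_of_pos (hwpos z)]; exact hub z) (abs_nonneg _) hMψ0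
    have hptwise : ∀ (y : Fin d → ℝ) (S : ℝ),
        |(∫ s in (0:ℝ)..S, φ₁ (Xa s y)) - ∫ s in (0:ℝ)..S, φ₂ (Xa s y)|
          ≤ 2 * (Mψ * c₂ * (|t| / c₁)) := by
      intro y S
      set G : ℝ → ℝ := fun r => φ₂ (Xa r y) with hG
      set u : ℝ → ℝ := fun s => σ y (t + ∫ r in (0:ℝ)..s, w (Xa r y)) with hu
      have hGc : Continuous G := hφ₂c.comp (hXacont.comp (continuous_id.prodMk continuous_const))
      have hGbd : ∀ r, |G r| ≤ Mψ * c₂ := fun r => hφ₂bd _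
      have hinner : ∀ s : ℝ, HasDerivAt (fun s' => t + ∫ r in (0:ℝ)..s', w (Xa r y))
          (w (Xa s y)) s := fun s =>
        (((hbase y).integral_hasStrictDerivAt 0 s).hasDerivAt).const_add t
      have hud : ∀ s : ℝ, HasDerivAt u ((w (Xa (u s) y))⁻¹ * w (Xa s y)) s := by
        intro s
        have h1 := (hσ3 y (t + ∫ r in (0:ℝ)..s, w (Xa r y))).comp s (hinner s)
        rw [Function.comp_def] at h1
        exact h1
      have hucont : Continuous u := by
        rw [continuous_iff_continuousAt]; exact fun s => (hud s).continuousAt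
      have hu'c : Continuous fun s => (w (Xa (u s) y))⁻¹ * w (Xa s y) := by
        apply Continuous.mul
        · apply Continuous.inv₀
          · exact hwc.comp (hXacont.comp (hucont.prodMk continuous_const))
          · exact fun s => (hwpos _).ne'
        · exact hbase y
      have hXbXa : ∀ s : ℝ, Xb t (Xa s y) = Xa (u s) y := by
        intro s
        rw [hconj t (Xa s y), ← flow_add hKa hXa (σ (Xa s y) t) s y, hσcoc y s t]
      have hpt : ∀ s : ℝ, φ₁ (Xa s y) = ((w (Xa (u s) y))⁻¹ * w (Xa s y)) • G (u s) := by
        intro s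
        have hne : w (Xa (u s) y) ≠ 0 := (hwpos _).ne'
        simp only [hφ₁, hG, hφ₂, smul_eq_mul]
        rw [hXbXa s]
        field_simp
      have hsub1 : (∫ s in (0:ℝ)..S, φ₁ (Xa s y)) = ∫ r in (u 0)..(u S), G r := by
        rw [intervalIntegral.integral_congr
          (g := fun s => ((w (Xa (u s) y))⁻¹ * w (Xa s y)) • G (u s)) (fun s _ => hpt s)]
        have := intervalIntegral.integral_comp_smul_deriv (a := (0:ℝ)) (b := S)
          (f := u) (f' := fun s => (w (Xa (u s) y))⁻¹ * w (Xa s y)) (g := G)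
          (fun x _ => hud x) hu'c.continuousOn hGc
        rw [← this]
        apply intervalIntegral.integral_congr
        intro s _
        simp [Function.comp]
      have hu0 : u 0 = σ y t := by
        simp only [hu]
        rw [intervalIntegral.integral_same, add_zero]
      have hb1 : |u 0 - 0| ≤ |t| / c₁ := by
        rw [hu0, sub_zero]
        have h1 := hσ4 y t 0
        rw [hσ5 y, sub_zero, sub_zero] at h1
        exact h1
      have hbS : |u S - S| ≤ |t| / c₁ := by
        have h1 := hσ4 y (t + ∫ r in (0:ℝ)..S, w (Xa r y)) (∫ r in (0:ℝ)..S, w (Xa r y))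
        rw [hσ2 y S] at h1
        simp only [hu]
        simpa using h1
      have hiG : ∀ a b : ℝ, IntervalIntegrable G volume a b := fun a b =>
        hGc.intervalIntegrable _ _
      have hsplit : (∫ r in (u 0)..(u S), G r)
          = ((∫ r in (u 0)..(0:ℝ), G r) + (∫ r in (0:ℝ)..S, G r)) + ∫ r in S..(u S), G r := by
        rw [intervalIntegral.integral_add_adjacent_intervals (hiG (u 0) 0) (hiG 0 S),
          intervalIntegral.integral_add_adjacent_intervals (hiG (u 0) S) (hiG S (u S))]
      have hn1 : |∫ r in (u 0)..(0:ℝ), G r| ≤ Mψ * c₂ * (|t| / c₁) := by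
        have h1 := intervalIntegral.norm_integral_le_of_norm_le_const (C := Mψ * c₂)
          (f := G) (a := u 0) (b := 0)
          (fun x _ => by rw [Real.norm_eq_abs]; exact hGbd x)
        rw [Real.norm_eq_abs] at h1
        refine le_trans h1 ?_
        rw [abs_sub_comm (0:ℝ) (u 0)]
        exact mul_le_mul_of_nonneg_left hb1 (by positivity)
      have hn2 : |∫ r in S..(u S), G r| ≤ Mψ * c₂ * (|t| / c₁) := by
        have h1 := intervalIntegral.norm_integral_le_of_norm_le_const (C := Mψ * c₂)
          (f := G) (a := S) (b := u S)
          (fun x _ => by rw [Real.norm_eq_abs]; exact hGbd x)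
        rw [Real.norm_eq_abs] at h1
        refine le_trans h1 ?_
        exact mul_le_mul_of_nonneg_left hbS (by positivity)
      have hGeq : (∫ s in (0:ℝ)..S, φ₂ (Xa s y)) = ∫ r in (0:ℝ)..S, G r := rfl
      rw [hsub1, hGeq, hsplit]
      have hring : ((∫ r in (u 0)..(0:ℝ), G r) + (∫ r in (0:ℝ)..S, G r)) + (∫ r in S..(u S), G r)
          - (∫ r in (0:ℝ)..S, G r) = (∫ r in (u 0)..(0:ℝ), G r) + ∫ r in S..(u S), G r := by
        ring
      rw [hring]
      calc |(∫ r in (u 0)..(0:ℝ), G r) + ∫ r in S..(u S), G r|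
          ≤ |∫ r in (u 0)..(0:ℝ), G r| + |∫ r in S..(u S), G r| := abs_add_le _ _
        _ ≤ Mψ * c₂ * (|t| / c₁) + Mψ * c₂ * (|t| / c₁) := add_le_add hn1 hn2
        _ = 2 * (Mψ * c₂ * (|t| / c₁)) := by ring
    set Cst : ℝ := 2 * (Mψ * c₂ * (|t| / c₁)) with hCst
    have hCst0 : 0 ≤ Cst := by positivity
    have hdiff : ∀ S : ℝ, 0 < S →
        |(∫ y, φ₁ y ∂ν) - ∫ y, φ₂ y ∂ν| ≤ Cst / S := by
      intro S hS
      obtain ⟨havg1, hint1⟩ := average hXacont hinv hφ₁c hφ₁p hS.le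
      obtain ⟨havg2, hint2⟩ := average hXacont hinv hφ₂c hφ₂p hS.le
      have hsub := integral_sub hint1 hint2
      have hbd : ‖∫ y, ((∫ s in (0:ℝ)..S, φ₁ (Xa s y)) - ∫ s in (0:ℝ)..S, φ₂ (Xa s y)) ∂ν‖
          ≤ Cst := by
        have h1 := norm_integral_le_of_norm_le_const (μ := ν) (C := Cst)
          (f := fun y => (∫ s in (0:ℝ)..S, φ₁ (Xa s y)) - ∫ s in (0:ℝ)..S, φ₂ (Xa s y))
          (Eventually.of_forall fun y => by rw [Real.norm_eq_abs]; exact hptwise y S)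
        simpa [measure_univ] using h1
      rw [hsub, havg1, havg2] at hbd
      rw [Real.norm_eq_abs, ← mul_sub, abs_mul, abs_of_pos hS] at hbd
      rw [le_div_iff₀ hS]
      calc |(∫ y, φ₁ y ∂ν) - ∫ y, φ₂ y ∂ν| * S
          = S * |(∫ y, φ₁ y ∂ν) - ∫ y, φ₂ y ∂ν| := mul_comm _ _
        _ ≤ Cst := hbd
    have hAB : ∀ ε : ℝ, 0 < ε → |(∫ y, φ₁ y ∂ν) - ∫ y, φ₂ y ∂ν| ≤ ε := by
      intro ε hε
      have hSpos : 0 < max 1 (Cst / ε) := lt_of_lt_of_le one_pos (le_max_left _ _)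
      refine le_trans (hdiff _ hSpos) ?_
      rw [div_le_iff₀ hSpos]
      calc Cst = (Cst / ε) * ε := by field_simp
        _ ≤ max 1 (Cst / ε) * ε := by
            apply mul_le_mul_of_nonneg_right (le_max_right _ _) hε.le
        _ = ε * max 1 (Cst / ε) := mul_comm _ _
    have hle0 : |(∫ y, φ₁ y ∂ν) - ∫ y, φ₂ y ∂ν| ≤ 0 := by
      by_contra hcon
      push_neg at hcon
      have := hAB (|(∫ y, φ₁ y ∂ν) - ∫ y, φ₂ y ∂ν| / 2) (by linarith)
      linarith
    have h0 : |(∫ y, φ₁ y ∂ν) - ∫ y, φ₂ y ∂ν| = 0 := le_antisymm hle0 (abs_nonneg _)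
    rw [abs_eq_zero, sub_eq_zero] at h0
    exact h0
  -- construction of the transported measure
  have hwint : Integrable w ν :=
    ⟨hwc.aestronglyMeasurable, HasFiniteIntegral.of_bounded (C := c₂)
      (Eventually.of_forall fun y => hub' y)⟩
  set Z : ℝ := ∫ y, w y ∂ν with hZ
  have hZpos : 0 < Z := by
    have h1 : (∫ _y : Fin d → ℝ, c₁ ∂ν) ≤ Z := by
      apply integral_mono (integrable_const c₁) hwint
      intro y
      exact hlb y
    rw [integral_const, measureReal_def, measure_univ, ENNReal.toReal_one, one_smul] at h1
    linarith
  have hDmeas : Measurable fun y => (w y).toNNReal := hwc.measurable.real_toNNReal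
  set μ : Measure (Fin d → ℝ) :=
    (ENNReal.ofReal Z)⁻¹ • ν.withDensity (fun y => ((w y).toNNReal : ENNReal)) with hμ
  have hformS : ∀ f : (Fin d → ℝ) → ℝ, ∫ y, f y ∂μ = Z⁻¹ • ∫ y, w y • f y ∂ν := by
    intro f
    rw [hμ, integral_smul_measure, integral_withDensity_eq_integral_smul hDmeas]
    have h1 : ((ENNReal.ofReal Z)⁻¹).toReal = Z⁻¹ := by
      rw [ENNReal.toReal_inv, ENNReal.toReal_ofReal hZpos.le]
    rw [h1]
    congr 1
    apply integral_congr_ae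
    refine Eventually.of_forall fun y => ?_
    show (w y).toNNReal • f y = w y • f y
    rw [NNReal.smul_def, Real.coe_toNNReal _ (hwpos y).le]
  have hformV : ∀ f : (Fin d → ℝ) → (Fin d → ℝ), ∫ y, f y ∂μ = Z⁻¹ • ∫ y, w y • f y ∂ν := by
    intro f
    rw [hμ, integral_smul_measure, integral_withDensity_eq_integral_smul hDmeas]
    have h1 : ((ENNReal.ofReal Z)⁻¹).toReal = Z⁻¹ := by
      rw [ENNReal.toReal_inv, ENNReal.toReal_ofReal hZpos.le]
    rw [h1]
    congr 1
    apply integral_congr_ae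
    refine Eventually.of_forall fun y => ?_
    show (w y).toNNReal • f y = w y • f y
    rw [NNReal.smul_def, Real.coe_toNNReal _ (hwpos y).le]
  have hZlint : ∫⁻ y, ((w y).toNNReal : ENNReal) ∂ν = ENNReal.ofReal Z := by
    rw [hZ, ofReal_integral_eq_lintegral_ofReal hwint
      (Eventually.of_forall fun y => (hwpos y).le)]
    rfl
  have hμprob : IsProbabilityMeasure μ := by
    constructor
    rw [hμ, Measure.smul_apply, withDensity_apply _ MeasurableSet.univ,
      Measure.restrict_univ, hZlint, smul_eq_mul]
    exact ENNReal.inv_mul_cancel (by simp [hZpos]) ENNReal.ofReal_ne_top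
  have hcubemeas : MeasurableSet (unitCube d) := by
    have h1 : unitCube d = ⋂ i, (fun x : Fin d → ℝ => x i) ⁻¹' Set.Ico (0:ℝ) 1 := by
      ext x
      simp [unitCube, Set.mem_iInter]
    rw [h1]
    exact MeasurableSet.iInter fun i => (measurable_pi_apply i) measurableSet_Ico
  have hμcube : μ (unitCube d)ᶜ = 0 := by
    rw [hμ, Measure.smul_apply, withDensity_apply _ hcubemeas.compl,
      Measure.restrict_eq_zero.mpr hνc]
    simp
  have hinvb : FlowInvariant Xb μ := by
    intro t ψ hψc hψp
    rw [hformS (fun y => ψ (Xb t y)), hformS ψ]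
    congr 1
    calc ∫ y, w y • ψ (Xb t y) ∂ν = ∫ y, ψ (Xb t y) * w y ∂ν := by
          apply integral_congr_ae
          exact Eventually.of_forall fun y => by
            show w y • ψ (Xb t y) = ψ (Xb t y) * w y
            rw [smul_eq_mul]; ring
      _ = ∫ y, ψ y * w y ∂ν := key ψ hψc hψp t
      _ = ∫ y, w y • ψ y ∂ν := by
          apply integral_congr_ae
          exact Eventually.of_forall fun y => by
            show ψ y * w y = w y • ψ y
            rw [smul_eq_mul]; ring
  exact ⟨μ, hμprob, hμcube, hinvb, hZpos, hformV⟩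


end RotAux

/-- For a nowhere-vanishing `Φ ∈ C¹_♯(Y_d)^d`, the set of everywhere
positive `ρ ∈ C¹_♯(Y_d)` such that `C_{ρΦ}` is a singleton is closed (for the uniform
convergence topology) in the set of everywhere positive functions of `C¹_♯(Y_d)`: if each
`C_{ρ_n Φ}` is a singleton and `ρ_n → ρ` uniformly with `ρ` positive, then `C_{ρΦ}` is a
singleton. -/
theorem singleton_rotationSet_closed_under_uniform_limits {d : ℕ} (hd : 1 ≤ d)
    (Φ : (Fin d → ℝ) → (Fin d → ℝ)) (hΦ : ContDiff ℝ 1 Φ) (hΦper : ZdPeriodic Φ)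
    (hΦne : ∀ y, Φ y ≠ 0)
    (ρn : ℕ → (Fin d → ℝ) → ℝ)
    (hρn : ∀ n, ContDiff ℝ 1 (ρn n)) (hρnper : ∀ n, ZdPeriodic (ρn n))
    (hρnpos : ∀ n y, 0 < ρn n y)
    (Xn : ℕ → ℝ → (Fin d → ℝ) → (Fin d → ℝ))
    (hXn : ∀ n, IsFlowOf (fun y => ρn n y • Φ y) (Xn n))
    (hsin : ∀ n, ∃ ζ : Fin d → ℝ, rotationSet (fun y => ρn n y • Φ y) (Xn n) = {ζ})
    (ρ : (Fin d → ℝ) → ℝ) (hρ : ContDiff ℝ 1 ρ) (hρper : ZdPeriodic ρ) (hρpos : ∀ y, 0 < ρ y)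
    (hunif : TendstoUniformly ρn ρ atTop)
    (X : ℝ → (Fin d → ℝ) → (Fin d → ℝ)) (hX : IsFlowOf (fun y => ρ y • Φ y) X) :
    ∃ ζ : Fin d → ℝ, rotationSet (fun y => ρ y • Φ y) X = {ζ} := by
  classical
  obtain ⟨c, hc, hclb⟩ := RotAux.pos_lower_bound hρ.continuous hρper hρpos
  choose ζs hζs using hsin
  -- a reference invariant measure for X, transported from the flow Xn 0
  have hmem₀ : ζs 0 ∈ rotationSet (fun y => ρn 0 y • Φ y) (Xn 0) := by
    rw [hζs 0]
    exact Set.mem_singleton _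
  obtain ⟨ν₀, hν₀p, hν₀c, hν₀i, hζ₀v⟩ := hmem₀
  obtain ⟨μ₀, hμ₀p, hμ₀c, hμ₀i, hZ₀, hform₀⟩ := RotAux.transfer Φ hΦ hΦper hΦne (ρn 0) ρ
    (hρn 0) (hρnper 0) (hρnpos 0) hρ hρper hρpos (Xn 0) X (hXn 0) hX ν₀ hν₀p hν₀c hν₀i
  set ζ : Fin d → ℝ := ∫ y, ρ y • Φ y ∂μ₀ with hζdef
  -- any invariant probability measure for X yields the limit of the ζs
  have hmain : ∀ μ : Measure (Fin d → ℝ), IsProbabilityMeasure μ → μ (unitCube d)ᶜ = 0 →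
      FlowInvariant X μ → Tendsto ζs atTop (nhds (∫ y, ρ y • Φ y ∂μ)) := by
    intro μ hp hcb hi
    haveI := hp
    have hζn : ∀ n, ζs n = (∫ y, ρ y / ρn n y ∂μ)⁻¹ • ∫ y, ρ y • Φ y ∂μ := by
      intro n
      obtain ⟨μn, hμnp, hμnc, hμni, hZn, hformn⟩ := RotAux.transfer Φ hΦ hΦper hΦne ρ (ρn n)
        hρ hρper hρpos (hρn n) (hρnper n) (hρnpos n) X (Xn n) hX (hXn n) μ hp hcb hi
      have hval : (∫ y, (fun y => ρn n y • Φ y) y ∂μn)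
          ∈ rotationSet (fun y => ρn n y • Φ y) (Xn n) := ⟨μn, hμnp, hμnc, hμni, rfl⟩
      rw [hζs n, Set.mem_singleton_iff] at hval
      rw [hformn (fun y => ρn n y • Φ y)] at hval
      rw [← hval]
      congr 1
      apply integral_congr_ae
      refine Eventually.of_forall fun y => ?_
      show (ρ y / ρn n y) • ((fun y => ρn n y • Φ y) y) = ρ y • Φ y
      show (ρ y / ρn n y) • (ρn n y • Φ y) = ρ y • Φ y
      rw [smul_smul, div_mul_cancel₀ _ (hρnpos n y).ne']
    have hZtend : Tendsto (fun n => ∫ y, ρ y / ρn n y ∂μ) atTop (nhds 1) := by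
      rw [Metric.tendsto_atTop]
      intro ε hε
      have hev := Metric.tendstoUniformly_iff.mp hunif (min (c / 2) (c * ε / 4))
        (by positivity)
      rw [eventually_atTop] at hev
      obtain ⟨N, hN⟩ := hev
      refine ⟨N, fun n hn => ?_⟩
      have hclose := hN n hn
      have hρnlb : ∀ y, c / 2 ≤ ρn n y := by
        intro y
        have h1 := hclose y
        rw [Real.dist_eq] at h1
        have h2 := abs_lt.mp (lt_of_lt_of_le h1 (min_le_left _ _))
        have h3 := hclb y
        linarith [h2.1, h2.2]
      have hwbd : ∀ y, |ρ y / ρn n y - 1| ≤ ε / 2 := by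
        intro y
        have hne : ρn n y ≠ 0 := (hρnpos n y).ne'
        have h1 : ρ y / ρn n y - 1 = (ρ y - ρn n y) / ρn n y := by
          field_simp
        rw [h1, abs_div]
        have h2 : |ρ y - ρn n y| ≤ c * ε / 4 := by
          have h3 := hclose y
          rw [Real.dist_eq] at h3
          exact le_of_lt (lt_of_lt_of_le h3 (min_le_right _ _))
        have h3 : c / 2 ≤ |ρn n y| := by
          rw [abs_of_pos (hρnpos n y)]
          exact hρnlb y
        calc |ρ y - ρn n y| / |ρn n y| ≤ (c * ε / 4) / (c / 2) :=
              div_le_div₀ (by positivity) h2 (by positivity) h3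
          _ = ε / 2 := by
              field_simp
              ring
      have hwcont : Continuous fun y => ρ y / ρn n y :=
        hρ.continuous.div (hρn n).continuous fun y => (hρnpos n y).ne'
      have hwper : ZdPeriodic fun y => ρ y / ρn n y := by
        intro κ x
        show ρ (x + fun i => ((κ i : ℤ) : ℝ)) / ρn n (x + fun i => ((κ i : ℤ) : ℝ))
          = ρ x / ρn n x
        rw [hρper, hρnper]
      obtain ⟨M, hM0, hM⟩ := RotAux.bound_of_periodic hwcont hwper
      have hwin : Integrable (fun y => ρ y / ρn n y) μ :=
        ⟨hwcont.aestronglyMeasurable, HasFiniteIntegral.of_bounded (C := M)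
          (Eventually.of_forall hM)⟩
      have h4 : (∫ y, (ρ y / ρn n y - 1) ∂μ) = (∫ y, ρ y / ρn n y ∂μ) - 1 := by
        rw [integral_sub hwin (integrable_const 1), integral_const, measureReal_def, measure_univ,
          ENNReal.toReal_one, one_smul]
      have h5 := norm_integral_le_of_norm_le_const (μ := μ) (C := ε / 2)
        (f := fun y => ρ y / ρn n y - 1)
        (Eventually.of_forall fun y => by rw [Real.norm_eq_abs]; exact hwbd y)
      rw [h4, measureReal_def, measure_univ, ENNReal.toReal_one, mul_one, Real.norm_eq_abs] at h5
      rw [Real.dist_eq]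
      linarith
    have h6 := (hZtend.inv₀ one_ne_zero).smul_const (∫ y, ρ y • Φ y ∂μ)
    rw [inv_one, one_smul] at h6
    exact Tendsto.congr (fun n => (hζn n).symm) h6
  have huniq : ∀ μ : Measure (Fin d → ℝ), IsProbabilityMeasure μ → μ (unitCube d)ᶜ = 0 →
      FlowInvariant X μ → (∫ y, ρ y • Φ y ∂μ) = ζ :=
    fun μ hp hcb hi => tendsto_nhds_unique (hmain μ hp hcb hi) (hmain μ₀ hμ₀p hμ₀c hμ₀i)
  refine ⟨ζ, ?_⟩
  ext x
  simp only [Set.mem_singleton_iff, rotationSet, Set.mem_setOf_eq]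
  constructor
  · rintro ⟨μ, hp, hcb, hi, rfl⟩
    exact huniq μ hp hcb hi
  · rintro rfl
    exact ⟨μ₀, hμ₀p, hμ₀c, hμ₀i, (huniq μ₀ hμ₀p hμ₀c hμ₀i).symm⟩
end
end
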